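/- arXiv:0910.5281 — 5 statements merged into one kernel-verified Lean document; each statement's English description precedes it below -/
import Mathlib

section
/- Let p and p′ be two nanophrases in P_n(α,O). If p ∼ p′, then p ∼_O p′. -/
/-- A phrase datum over `α`: a Gauss-phrase-candidate written as a single list in which
`some A` is an occurrence of the letter `A` (letters are natural numbers) and `none` is a
component separator, together with a projection of the letters to `α`.  An `n`-component
phrase has `n - 1` separators. -/
structure Phrase (α : Type) where
  word : List (Option ℕ)
  proj : ℕ → α

namespace Phrase

variable {α : Type}

/-- The Gauss condition: every letter that occurs, occurs exactly twice. -/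
def IsGauss (p : Phrase α) : Prop :=
  ∀ A : ℕ, p.word.count (some A) = 0 ∨ p.word.count (some A) = 2

/-- The list of components (words in the letters) of a phrase datum. -/
def compsOf (w : List (Option ℕ)) : List (List ℕ) :=
  (w.splitOn none).map (List.filterMap id)

/-- The number of components of a phrase. -/
def numComps (p : Phrase α) : ℕ := (compsOf p.word).length

/-- The `i`-th component (0-indexed) of a phrase. -/
def comp (p : Phrase α) (i : ℕ) : List ℕ := (compsOf p.word).getD i []

/-- Isomorphism of phrases: a projection-preserving bijective renaming of letters,
applied componentwise. -/
def Isom (p q : Phrase α) : Prop :=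
  ∃ f : Equiv.Perm ℕ,
    q.word = p.word.map (Option.map f) ∧
    ∀ A : ℕ, some A ∈ p.word → q.proj (f A) = p.proj A

/-- A single homotopy move (H1, H2 or H3), with data `τ` (an involution on `α`) and
`S ⊆ α × α × α`.  The patterns are contiguous in the phrase; the intervening segments
`x, y, z, t` may contain component separators. -/
def Move (τ : α → α) (S : Set (α × α × α)) (p q : Phrase α) : Prop :=
  q.proj = p.proj ∧
  ((∃ (x y : List (Option ℕ)) (A : ℕ),
      p.word = x ++ some A :: some A :: y ∧ q.word = x ++ y) ∨
   (∃ (x y z : List (Option ℕ)) (A B : ℕ),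
      τ (p.proj A) = p.proj B ∧
      p.word = x ++ some A :: some B :: (y ++ some B :: some A :: z) ∧
      q.word = x ++ (y ++ z)) ∨
   (∃ (x y z t : List (Option ℕ)) (A B C : ℕ),
      (p.proj A, p.proj B, p.proj C) ∈ S ∧
      p.word = x ++ some A :: some B :: (y ++ some A :: some C :: (z ++ some B :: some C :: t)) ∧
      q.word = x ++ some B :: some A :: (y ++ some C :: some A :: (z ++ some C :: some B :: t))))

/-- Homotopy of phrases over `α`: the equivalence relation generated by isomorphisms
and the homotopy moves. -/
def Homotopy (τ : α → α) (S : Set (α × α × α)) : Phrase α → Phrase α → Prop :=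
  Relation.EqvGen (fun p q => Isom p q ∨ Move τ S p q)

end Phrase

namespace Phrase

variable {α : Type}

/-- `p` lies in `P_n(α, O)`: every component whose index lies in `O` is empty. -/
def InPO (O : Finset ℕ) (p : Phrase α) : Prop := ∀ i ∈ O, comp p i = []

/-- The relation `∼_O`: the equivalence relation generated by isomorphisms and homotopy
moves relating phrases all of whose components with index in `O` are empty. -/
def HomotopyO (τ : α → α) (S : Set (α × α × α)) (O : Finset ℕ) :
    Phrase α → Phrase α → Prop :=
  Relation.EqvGen (fun p q => (Isom p q ∨ Move τ S p q) ∧ InPO O p ∧ InPO O q)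

/-- `f_O(p)`: delete from `p` every letter occurring at least once in a component whose
index lies in `O`. -/
def fO (p : Phrase α) (O : Finset ℕ) : Phrase α :=
  ⟨p.word.filter (fun o => o.elim true (fun A => decide (∀ i ∈ O, A ∉ comp p i))), p.proj⟩

end Phrase

namespace SigProof
open scoped Classical

variable (O : Finset ℕ)

/-- least index not in `O` -/
noncomputable def hsO : ℕ := Nat.find (Infinite.exists_notMem_finset O)

lemma hsO_not_mem : hsO O ∉ O := Nat.find_spec (Infinite.exists_notMem_finset O)

lemma hsO_min {k : ℕ} (hk : k ∉ O) : hsO O ≤ k := Nat.find_min' _ hk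

/-- new component index for a letter in component `c` -/
noncomputable def gg (c : ℕ) : ℕ :=
  if h : ∃ k ∈ Finset.range (c + 1), k ∉ O then Nat.findGreatest (fun k => k ∉ O) c
  else hsO O

lemma gg_not_mem (c : ℕ) : gg O c ∉ O := by
  unfold gg
  split
  · rename_i h
    obtain ⟨k, hk, hkO⟩ := h
    exact Nat.findGreatest_spec (P := fun k => k ∉ O) (Nat.lt_succ_iff.mp (Finset.mem_range.mp hk)) hkO
  · exact hsO_not_mem O

lemma gg_eq_self {c : ℕ} (h : c ∉ O) : gg O c = c := by
  unfold gg
  rw [dif_pos ⟨c, Finset.mem_range.mpr (Nat.lt_succ_self c), h⟩]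
  exact le_antisymm (Nat.findGreatest_le c) (Nat.le_findGreatest (P := fun k => k ∉ O) le_rfl h)

lemma gg_mono {c d : ℕ} (h : c ≤ d) : gg O c ≤ gg O d := by
  unfold gg
  by_cases hc : ∃ k ∈ Finset.range (c + 1), k ∉ O
  · obtain ⟨k, hk, hkO⟩ := hc
    have hkc : k ≤ c := Nat.lt_succ_iff.mp (Finset.mem_range.mp hk)
    have hd : ∃ k ∈ Finset.range (d + 1), k ∉ O :=
      ⟨k, Finset.mem_range.mpr (Nat.lt_succ_iff.mpr (hkc.trans h)), hkO⟩
    rw [dif_pos ⟨k, Finset.mem_range.mpr (Nat.lt_succ_iff.mpr hkc), hkO⟩, dif_pos hd]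
    exact Nat.le_findGreatest (P := fun k => k ∉ O) ((Nat.findGreatest_le c).trans h)
      (Nat.findGreatest_spec (P := fun k => k ∉ O) hkc hkO)
  · rw [dif_neg hc]
    by_cases hd : ∃ k ∈ Finset.range (d + 1), k ∉ O
    · rw [dif_pos hd]
      obtain ⟨k, hk, hkO⟩ := hd
      have hkd : k ≤ d := Nat.lt_succ_iff.mp (Finset.mem_range.mp hk)
      exact hsO_min O (Nat.findGreatest_spec (P := fun k => k ∉ O) hkd hkO)
    · rw [dif_neg hd]

lemma gg_le (c : ℕ) : gg O c ≤ max c (hsO O) := by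
  unfold gg
  split
  · exact le_max_of_le_left (Nat.findGreatest_le c)
  · exact le_max_right _ _


section Tag

variable (O : Finset ℕ)

/-- tagged letters of a word: each letter paired with its new component index -/
noncomputable def tagW : ℕ → List (Option ℕ) → List (ℕ × ℕ)
  | _, [] => []
  | c, none :: w => tagW (c + 1) w
  | c, some a :: w => (a, gg O c) :: tagW c w

lemma tagW_append (x : List (Option ℕ)) : ∀ (c : ℕ) (y : List (Option ℕ)),
    tagW O c (x ++ y) = tagW O c x ++ tagW O (c + x.count none) y := by
  induction x with
  | nil => intro c y; simp [tagW]
  | cons hd tl ih =>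
    intro c y
    cases hd with
    | none =>
      simp only [List.cons_append, tagW, List.append_eq, ih (c + 1), List.count_cons_self]
      have : c + 1 + tl.count none = c + (tl.count none + 1) := by omega
      rw [this]
    | some a =>
      simp only [List.cons_append, tagW, List.append_eq, ih c]
      rw [List.count_cons_of_ne (by simp)]

lemma mem_tagW_snd_not_mem : ∀ (w : List (Option ℕ)) (c : ℕ) (pr : ℕ × ℕ),
    pr ∈ tagW O c w → pr.2 ∉ O := by
  intro w
  induction w with
  | nil => intro c pr h; simp [tagW] at h
  | cons hd tl ih =>
    intro c pr h
    cases hd with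
    | none => exact ih _ _ h
    | some a =>
      simp only [tagW, List.mem_cons] at h
      rcases h with h | h
      · rw [h]; exact gg_not_mem O c
      · exact ih _ _ h

lemma mem_tagW_fst : ∀ (w : List (Option ℕ)) (c : ℕ) (pr : ℕ × ℕ),
    pr ∈ tagW O c w → some pr.1 ∈ w := by
  intro w
  induction w with
  | nil => intro c pr h; simp [tagW] at h
  | cons hd tl ih =>
    intro c pr h
    cases hd with
    | none => exact List.mem_cons_of_mem _ (ih _ _ h)
    | some a =>
      simp only [tagW, List.mem_cons] at h
      rcases h with h | h
      · rw [h]; exact List.mem_cons_self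
      · exact List.mem_cons_of_mem _ (ih _ _ h)

lemma mem_tagW_ge : ∀ (w : List (Option ℕ)) (c : ℕ) (pr : ℕ × ℕ),
    pr ∈ tagW O c w → gg O c ≤ pr.2 := by
  intro w
  induction w with
  | nil => intro c pr h; simp [tagW] at h
  | cons hd tl ih =>
    intro c pr h
    cases hd with
    | none => exact (gg_mono O (Nat.le_succ c)).trans (ih _ _ h)
    | some a =>
      simp only [tagW, List.mem_cons] at h
      rcases h with h | h
      · rw [h]
      · exact ih _ _ h

lemma mem_tagW_le : ∀ (w : List (Option ℕ)) (c : ℕ) (pr : ℕ × ℕ),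
    pr ∈ tagW O c w → pr.2 ≤ gg O (c + w.count none) := by
  intro w
  induction w with
  | nil => intro c pr h; simp [tagW] at h
  | cons hd tl ih =>
    intro c pr h
    cases hd with
    | none =>
      have := ih _ _ h
      rw [List.count_cons_self]
      calc pr.2 ≤ gg O (c + 1 + tl.count none) := this
        _ ≤ _ := gg_mono O (by omega)
    | some a =>
      rw [List.count_cons_of_ne (by simp)]
      simp only [tagW, List.mem_cons] at h
      rcases h with h | h
      · rw [h]; exact gg_mono O (by omega)
      · exact ih _ _ h

lemma tagW_map (f : ℕ → ℕ) : ∀ (w : List (Option ℕ)) (c : ℕ),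
    tagW O c (w.map (Option.map f)) = (tagW O c w).map (fun pr => (f pr.1, pr.2)) := by
  intro w
  induction w with
  | nil => intro c; simp [tagW]
  | cons hd tl ih =>
    intro c
    cases hd with
    | none => simpa [tagW] using ih (c + 1)
    | some a => simp [tagW, ih c]

end Tag

section Emit

/-- running maximum of tags -/
def fmax (o : ℕ) (l : List (ℕ × ℕ)) : ℕ := l.foldl (fun acc pr => max acc pr.2) o

@[simp] lemma fmax_nil (o : ℕ) : fmax o [] = o := rfl

@[simp] lemma fmax_cons (o : ℕ) (pr : ℕ × ℕ) (l : List (ℕ × ℕ)) :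
    fmax o (pr :: l) = fmax (max o pr.2) l := rfl

lemma fmax_append (o : ℕ) (l1 l2 : List (ℕ × ℕ)) :
    fmax o (l1 ++ l2) = fmax (fmax o l1) l2 := List.foldl_append ..

lemma le_fmax : ∀ (l : List (ℕ × ℕ)) (o : ℕ), o ≤ fmax o l := by
  intro l
  induction l with
  | nil => intro o; simp
  | cons pr t ih => intro o; exact (le_max_left o pr.2).trans (ih _)

lemma fmax_le : ∀ (l : List (ℕ × ℕ)) (o m : ℕ), o ≤ m → (∀ pr ∈ l, pr.2 ≤ m) →
    fmax o l ≤ m := by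
  intro l
  induction l with
  | nil => intro o m h _; simpa
  | cons pr t ih =>
    intro o m h hm
    simp only [fmax_cons]
    exact ih _ _ (max_le h (hm pr (List.mem_cons_self)))
      (fun q hq => hm q (List.mem_cons_of_mem _ hq))

/-- emission of letters (without the trailing separators) -/
def g2 : ℕ → List (ℕ × ℕ) → List (Option ℕ)
  | _, [] => []
  | o, (a, t) :: r => List.replicate (t - o) none ++ some a :: g2 (max o t) r

lemma g2_append : ∀ (l1 : List (ℕ × ℕ)) (o : ℕ) (l2 : List (ℕ × ℕ)),
    g2 o (l1 ++ l2) = g2 o l1 ++ g2 (fmax o l1) l2 := by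
  intro l1
  induction l1 with
  | nil => intro o l2; simp [g2]
  | cons pr t ih =>
    intro o l2
    obtain ⟨a, ta⟩ := pr
    simp [g2, ih, List.append_assoc]

/-- the full assembler: emission plus trailing separators, `N` components total -/
def FF (N o : ℕ) (l : List (ℕ × ℕ)) : List (Option ℕ) :=
  g2 o l ++ List.replicate (N - 1 - fmax o l) none

lemma FF_append (N o : ℕ) (l1 l2 : List (ℕ × ℕ)) :
    FF N o (l1 ++ l2) = g2 o l1 ++ FF N (fmax o l1) l2 := by
  unfold FF
  rw [g2_append, fmax_append, List.append_assoc]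

lemma FF_cons (N : ℕ) {o t : ℕ} (h : o ≤ t) (a : ℕ) (r : List (ℕ × ℕ)) :
    FF N o ((a, t) :: r) = List.replicate (t - o) none ++ some a :: FF N t r := by
  unfold FF
  simp [g2, max_eq_right h, List.append_assoc]

lemma FF_reabsorb (N : ℕ) : ∀ (l : List (ℕ × ℕ)) (o t : ℕ), o ≤ t → t ≤ N - 1 →
    (∀ pr ∈ l, t ≤ pr.2) → FF N o l = List.replicate (t - o) none ++ FF N t l := by
  intro l
  cases l with
  | nil =>
    intro o t h1 h2 _
    unfold FF
    simp only [g2, fmax_nil, List.nil_append]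
    rw [← List.replicate_add]
    congr 1
    omega
  | cons pr r =>
    intro o t h1 _ hl
    obtain ⟨a, ta⟩ := pr
    have hta : t ≤ ta := hl (a, ta) (List.mem_cons_self)
    rw [FF_cons N (h1.trans hta), FF_cons N hta, ← List.append_assoc, ← List.replicate_add]
    congr 2
    omega

lemma gshift (N : ℕ) : ∀ (Q : List (ℕ × ℕ)) (o t : ℕ) (rest : List (ℕ × ℕ)),
    o ≤ t → t ≤ N - 1 → (∀ pr ∈ Q, t ≤ pr.2) → (∀ pr ∈ rest, t ≤ pr.2) →
    g2 o Q ++ FF N (fmax o Q) rest =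
      List.replicate (t - o) none ++ g2 t Q ++ FF N (fmax t Q) rest := by
  intro Q
  cases Q with
  | nil =>
    intro o t rest h1 h2 _ hrest
    simp only [g2, fmax_nil, List.nil_append, List.append_nil]
    exact FF_reabsorb N rest o t h1 h2 hrest
  | cons pr r =>
    intro o t rest h1 _ hQ _
    obtain ⟨a, ta⟩ := pr
    have hta : t ≤ ta := hQ (a, ta) (List.mem_cons_self)
    simp only [g2, fmax_cons, max_eq_right (h1.trans hta), max_eq_right hta,
      ← List.append_assoc, ← List.replicate_add]
    congr 3
    omega

lemma mem_g2 : ∀ (l : List (ℕ × ℕ)) (o : ℕ) (a : ℕ),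
    some a ∈ g2 o l → ∃ t, (a, t) ∈ l := by
  intro l
  induction l with
  | nil => intro o a h; simp [g2] at h
  | cons pr r ih =>
    intro o a h
    obtain ⟨b, tb⟩ := pr
    simp only [g2, List.mem_append, List.mem_replicate, List.mem_cons] at h
    rcases h with h | h | h
    · exact absurd h.2 (by simp)
    · exact ⟨tb, by simp [Option.some_inj.mp h.symm]⟩
    · obtain ⟨t, ht⟩ := ih _ _ h
      exact ⟨t, List.mem_cons_of_mem _ ht⟩

lemma mem_FF {N o a : ℕ} {l : List (ℕ × ℕ)} (h : some a ∈ FF N o l) : ∃ t, (a, t) ∈ l := by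
  unfold FF at h
  rw [List.mem_append] at h
  rcases h with h | h
  · exact mem_g2 l o a h
  · rw [List.mem_replicate] at h
    exact absurd h.2 (by simp)

lemma g2_map (f : ℕ → ℕ) : ∀ (l : List (ℕ × ℕ)) (o : ℕ),
    g2 o (l.map (fun pr => (f pr.1, pr.2))) = (g2 o l).map (Option.map f) := by
  intro l
  induction l with
  | nil => intro o; simp [g2]
  | cons pr r ih =>
    intro o
    obtain ⟨a, ta⟩ := pr
    simp [g2, ih, List.map_replicate]

lemma fmax_map_snd (f : ℕ → ℕ) : ∀ (l : List (ℕ × ℕ)) (o : ℕ),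
    fmax o (l.map (fun pr => (f pr.1, pr.2))) = fmax o l := by
  intro l
  induction l with
  | nil => intro o; simp
  | cons pr r ih => intro o; simp [ih]

lemma FF_map (f : ℕ → ℕ) (N : ℕ) (l : List (ℕ × ℕ)) (o : ℕ) :
    FF N o (l.map (fun pr => (f pr.1, pr.2))) = (FF N o l).map (Option.map f) := by
  unfold FF
  rw [List.map_append, g2_map, fmax_map_snd, List.map_replicate]
  rfl

end Emit

section Comps
open Phrase

lemma splitOn_none_cons_none (w : List (Option ℕ)) :
    (none :: w).splitOn (none : Option ℕ) = [] :: w.splitOn none := by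
  simp [List.splitOn, List.splitOnP_cons]

lemma splitOn_none_cons_some (a : ℕ) (w : List (Option ℕ)) :
    (some a :: w).splitOn (none : Option ℕ) =
      (w.splitOn none).modifyHead (List.cons (some a)) := by
  simp [List.splitOn, List.splitOnP_cons]

lemma compsOf_cons_none (w : List (Option ℕ)) :
    compsOf (none :: w) = [] :: compsOf w := by
  unfold compsOf
  rw [splitOn_none_cons_none]
  rfl

lemma compsOf_ne_nil (w : List (Option ℕ)) : compsOf w ≠ [] := by
  unfold compsOf
  simp [List.splitOn, List.splitOnP_ne_nil]

lemma compsOf_cons_some (a : ℕ) (w : List (Option ℕ)) :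
    compsOf (some a :: w) = (compsOf w).modifyHead (List.cons a) := by
  unfold compsOf
  rw [splitOn_none_cons_some]
  rcases h : w.splitOn (none : Option ℕ) with _ | ⟨hd, tl⟩
  · exact absurd h (List.splitOnP_ne_nil _ _)
  · simp [List.modifyHead]

lemma compsOf_replicate (k : ℕ) :
    compsOf (List.replicate k (none : Option ℕ)) = List.replicate (k + 1) [] := by
  induction k with
  | zero => rfl
  | succ m ih =>
    rw [List.replicate_succ, compsOf_cons_none, ih]
    simp [List.replicate_succ]

lemma compsOf_replicate_append (m : ℕ) (w : List (Option ℕ)) :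
    compsOf (List.replicate m (none : Option ℕ) ++ w) =
      List.replicate m [] ++ compsOf w := by
  induction m with
  | zero => simp
  | succ k ih =>
    rw [List.replicate_succ, List.cons_append, compsOf_cons_none, ih, List.replicate_succ,
      List.cons_append]

lemma length_compsOf : ∀ w : List (Option ℕ), (compsOf w).length = w.count none + 1 := by
  intro w
  induction w with
  | nil => rfl
  | cons hd tl ih =>
    cases hd with
    | none =>
      rw [compsOf_cons_none, List.length_cons, ih, List.count_cons_self]
    | some a =>
      rw [compsOf_cons_some, List.length_modifyHead, ih, List.count_cons_of_ne (by simp)]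

lemma getD_replicate {X : Type _} {a d : X} {k i : ℕ} (h : i < k) :
    (List.replicate k a).getD i d = a := by
  rw [List.getD_eq_getElem _ _ (by simpa using h)]
  simp

lemma getD_modifyHead_zero {X : Type _} (f : X → X) {l : List X} (h : l ≠ []) (d : X) :
    (l.modifyHead f).getD 0 d = f (l.getD 0 d) := by
  cases l with
  | nil => exact absurd rfl h
  | cons a t => rfl

lemma getD_modifyHead_succ {X : Type _} (f : X → X) (l : List X) (j : ℕ) (d : X) :
    (l.modifyHead f).getD (j + 1) d = l.getD (j + 1) d := by
  cases l <;> rfl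

/-- component contents of the assembled word -/
lemma comps_FF (N : ℕ) : ∀ (l : List (ℕ × ℕ)) (o : ℕ), o ≤ N - 1 →
    (∀ pr ∈ l, o ≤ pr.2 ∧ pr.2 ≤ N - 1) →
    List.Pairwise (fun p q : ℕ × ℕ => p.2 ≤ q.2) l → ∀ i : ℕ,
    (compsOf (FF N o l)).getD i [] = (l.filter (fun pr => pr.2 = o + i)).map Prod.fst := by
  intro l
  induction l with
  | nil =>
    intro o ho _ _ i
    unfold FF
    simp only [g2, fmax_nil, List.nil_append, List.filter_nil, List.map_nil]
    rw [compsOf_replicate]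
    rcases lt_or_ge i (N - 1 - o + 1) with h | h
    · exact getD_replicate h
    · rw [List.getD_eq_default]
      rw [List.length_replicate]
      omega
  | cons pr r ih =>
    intro o ho hl hpw i
    obtain ⟨a, ta⟩ := pr
    have hta : o ≤ ta ∧ ta ≤ N - 1 := hl (a, ta) (List.mem_cons_self)
    have hge : ∀ q ∈ r, ta ≤ q.2 := fun q hq => (List.pairwise_cons.mp hpw).1 q hq
    have hr : ∀ q ∈ r, ta ≤ q.2 ∧ q.2 ≤ N - 1 :=
      fun q hq => ⟨hge q hq, (hl q (List.mem_cons_of_mem _ hq)).2⟩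
    have hpw' : List.Pairwise (fun p q : ℕ × ℕ => p.2 ≤ q.2) r :=
      (List.pairwise_cons.mp hpw).2
    rw [FF_cons N hta.1, compsOf_replicate_append, compsOf_cons_some]
    rcases lt_trichotomy i (ta - o) with h | h | h
    · rw [List.getD_append _ _ _ _ (by rw [List.length_replicate]; exact h)]
      rw [getD_replicate h]
      have : List.filter (fun pr => decide (pr.2 = o + i)) ((a, ta) :: r) = [] := by
        rw [List.filter_eq_nil_iff]
        intro q hq
        simp only [decide_eq_true_eq]
        rcases List.mem_cons.mp hq with rfl | hq'
        · omega
        · have := hge q hq'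
          omega
      rw [this]
      rfl
    · have hoi : o + i = ta := by omega
      rw [List.getD_append_right _ _ _ _ (by rw [List.length_replicate]; omega)]
      rw [List.length_replicate, ← h, Nat.sub_self]
      rw [getD_modifyHead_zero _ (compsOf_ne_nil _) []]
      rw [ih ta hta.2 hr hpw' 0, Nat.add_zero]
      simp only [hoi]
      rw [List.filter_cons_of_pos (by simp), List.map_cons]
    · rw [List.getD_append_right _ _ _ _ (by rw [List.length_replicate]; omega)]
      rw [List.length_replicate]
      rw [show i - (ta - o) = (i - (ta - o) - 1) + 1 by omega, getD_modifyHead_succ]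
      rw [ih ta hta.2 hr hpw' (i - (ta - o) - 1 + 1)]
      have hoi : ta + (i - (ta - o) - 1 + 1) = o + i := by omega
      simp only [hoi]
      rw [List.filter_cons_of_neg (by simp; omega)]

end Comps

section Sigma
open Phrase

variable (O : Finset ℕ)

lemma tagW_pairwise : ∀ (w : List (Option ℕ)) (c : ℕ),
    List.Pairwise (fun p q : ℕ × ℕ => p.2 ≤ q.2) (tagW O c w) := by
  intro w
  induction w with
  | nil => intro c; simp [tagW]
  | cons hd tl ih =>
    intro c
    cases hd with
    | none => exact ih (c + 1)
    | some a =>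
      rw [tagW, List.pairwise_cons]
      exact ⟨fun q hq => mem_tagW_ge O tl c q hq, ih c⟩

/-- total number of components of the Σ-image of `w` -/
noncomputable def NN (w : List (Option ℕ)) : ℕ := max (w.count none + 1) (hsO O + 1)

lemma NN_pos (w : List (Option ℕ)) : 1 ≤ NN O w := le_trans (by omega) (le_max_left _ _)

lemma NN_sub_one (w : List (Option ℕ)) : NN O w - 1 = max (w.count none) (hsO O) := by
  unfold NN
  omega

lemma tagW_le_NN (w : List (Option ℕ)) : ∀ pr ∈ tagW O 0 w, pr.2 ≤ NN O w - 1 := by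
  intro pr hpr
  have h1 := mem_tagW_le O w 0 pr hpr
  have h2 := gg_le O (0 + w.count none)
  rw [NN_sub_one]
  omega

/-- the word of the Σ-image -/
noncomputable def Sw (w : List (Option ℕ)) : List (Option ℕ) := FF (NN O w) 0 (tagW O 0 w)

/-- Σ itself: reposition separators so that all components in `O` are empty -/
noncomputable def SPhr {α : Type} (q : Phrase α) : Phrase α := ⟨Sw O q.word, q.proj⟩

lemma comp_Sw (w : List (Option ℕ)) (i : ℕ) :
    (compsOf (Sw O w)).getD i [] =
      ((tagW O 0 w).filter (fun pr => pr.2 = i)).map Prod.fst := by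
  unfold Sw
  rw [comps_FF (NN O w) (tagW O 0 w) 0 (by omega)
    (fun pr hpr => ⟨Nat.zero_le _, tagW_le_NN O w pr hpr⟩) (tagW_pairwise O w 0) i]
  simp

lemma inPO_SPhr {α : Type} (q : Phrase α) : Phrase.InPO O (SPhr O q) := by
  intro i hi
  show (compsOf (Sw O q.word)).getD i [] = []
  rw [comp_Sw]
  rw [List.filter_eq_nil_iff.mpr, List.map_nil]
  intro pr hpr
  simp only [decide_eq_true_eq]
  intro hc
  exact mem_tagW_snd_not_mem O q.word 0 pr hpr (hc ▸ hi)

lemma mem_Sw {w : List (Option ℕ)} {a : ℕ} (h : some a ∈ Sw O w) : some a ∈ w := by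
  obtain ⟨t, ht⟩ := mem_FF h
  exact mem_tagW_fst O w 0 (a, t) ht

/-- Σ is the identity on words whose letters all live in components fixed by `gg` -/
lemma FF_tagW_id (N : ℕ) : ∀ (w : List (Option ℕ)) (c o : ℕ), o ≤ c →
    c + w.count none = N - 1 →
    (∀ x y (a : ℕ), w = x ++ some a :: y → gg O (c + x.count none) = c + x.count none) →
    FF N o (tagW O c w) = List.replicate (c - o) none ++ w := by
  intro w
  induction w with
  | nil =>
    intro c o ho hc _
    rw [List.count_nil] at hc
    unfold FF
    simp only [tagW, g2, fmax_nil, List.nil_append, List.append_nil]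
    congr 1
    omega
  | cons hd tl ih =>
    intro c o ho hc hg
    cases hd with
    | none =>
      have hc' : (c + 1) + tl.count none = N - 1 := by
        rw [List.count_cons_self] at hc
        omega
      have hg' : ∀ x y (a : ℕ), tl = x ++ some a :: y →
          gg O ((c + 1) + x.count none) = (c + 1) + x.count none := by
        intro x y a hxy
        have := hg (none :: x) y a (by rw [hxy]; rfl)
        rw [List.count_cons_self] at this
        calc gg O (c + 1 + x.count none) = gg O (c + (x.count none + 1)) := by ring_nf
          _ = c + (x.count none + 1) := this
          _ = c + 1 + x.count none := by ring
      rw [tagW, ih (c + 1) o (by omega) hc' hg']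
      rw [show c + 1 - o = (c - o) + 1 by omega, List.replicate_add]
      simp
    | some a =>
      have hgc : gg O c = c := by
        have := hg [] (tl) a rfl
        simpa using this
      rw [tagW, hgc, FF_cons N ho]
      have hc' : c + tl.count none = N - 1 := by
        rw [List.count_cons_of_ne (by simp)] at hc
        exact hc
      have hg' : ∀ x y (b : ℕ), tl = x ++ some b :: y →
          gg O (c + x.count none) = c + x.count none := by
        intro x y b hxy
        have := hg (some a :: x) y b (by rw [hxy]; rfl)
        rwa [List.count_cons_of_ne (by simp)] at this
      rw [ih c c le_rfl hc' hg']
      simp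

/-- any letter occurrence lies in the component given by the number of separators before it -/
lemma mem_comp_of_split : ∀ (x : List (Option ℕ)) (a : ℕ) (y : List (Option ℕ)),
    a ∈ (compsOf (x ++ some a :: y)).getD (x.count none) [] := by
  intro x
  induction x with
  | nil =>
    intro a y
    simp only [List.nil_append, List.count_nil]
    rw [compsOf_cons_some, getD_modifyHead_zero _ (compsOf_ne_nil _) []]
    exact List.mem_cons_self
  | cons hd tl ih =>
    intro a y
    cases hd with
    | none =>
      rw [List.cons_append, compsOf_cons_none, List.count_cons_self]
      exact ih a y
    | some b =>
      rw [List.cons_append, compsOf_cons_some, List.count_cons_of_ne (by simp)]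
      rcases Nat.eq_zero_or_pos (tl.count none) with h | h
      · rw [h, getD_modifyHead_zero _ (compsOf_ne_nil _) []]
        refine List.mem_cons_of_mem _ ?_
        rw [← h]
        exact ih a y
      · rw [show tl.count none = (tl.count none - 1) + 1 by omega, getD_modifyHead_succ]
        rw [show (tl.count none - 1) + 1 = tl.count none by omega]
        exact ih a y

/-- on phrases in `P_O` (with enough components), Σ is the identity -/
lemma SPhr_id {α : Type} (q : Phrase α) (hq : Phrase.InPO O q)
    (hn : hsO O ≤ q.word.count none) : SPhr O q = q := by
  have hid : Sw O q.word = q.word := by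
    unfold Sw
    have := FF_tagW_id O (NN O q.word) q.word 0 0 le_rfl
      (by rw [NN_sub_one]; omega)
      ?_
    · simpa using this
    · intro x y a hxy
      simp only [Nat.zero_add]
      apply gg_eq_self
      intro hmem
      have h1 : a ∈ (compsOf (x ++ some a :: y)).getD (x.count none) [] :=
        mem_comp_of_split x a y
      rw [← hxy] at h1
      have h2 : Phrase.comp q (x.count none) = [] := hq _ hmem
      rw [Phrase.comp] at h2
      rw [h2] at h1
      exact absurd h1 List.not_mem_nil
  show Phrase.mk (Sw O q.word) q.proj = q
  rw [hid]

end Sigma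


section EdgeLemma
open Phrase

variable (O : Finset ℕ)

lemma count_none_map (f : ℕ → ℕ) : ∀ w : List (Option ℕ),
    (w.map (Option.map f)).count none = w.count none := by
  intro w
  induction w with
  | nil => rfl
  | cons hd tl ih =>
    cases hd with
    | none => simp [ih]
    | some a =>
      rw [List.map_cons, List.count_cons_of_ne (by simp), List.count_cons_of_ne (by simp)]
      exact ih

lemma Sw_map (f : ℕ → ℕ) (w : List (Option ℕ)) :
    Sw O (w.map (Option.map f)) = (Sw O w).map (Option.map f) := by
  unfold Sw
  have hNN : NN O (w.map (Option.map f)) = NN O w := by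
    unfold NN
    rw [count_none_map]
  rw [hNN, tagW_map, FF_map]

lemma FF_block2 (N : ℕ) {o t : ℕ} (h : o ≤ t) (a b : ℕ) (r : List (ℕ × ℕ)) :
    FF N o ((a, t) :: (b, t) :: r) =
      List.replicate (t - o) none ++ some a :: some b :: FF N t r := by
  rw [FF_cons N h, FF_cons N le_rfl, Nat.sub_self]
  rfl

lemma tagW_cons2 (c : ℕ) (a b : ℕ) (w : List (Option ℕ)) :
    tagW O c (some a :: some b :: w) = (a, gg O c) :: (b, gg O c) :: tagW O c w := rfl

/-- Σ of a one-block decomposition -/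
lemma Sw_one_block {w w' : List (Option ℕ)} {x y : List (Option ℕ)} {a b : ℕ}
    (hw : w = x ++ some a :: some b :: y) (hw' : w' = x ++ y) :
    Sw O w = (g2 0 (tagW O 0 x) ++
        List.replicate (gg O (x.count none) - fmax 0 (tagW O 0 x)) none) ++
        some a :: some b :: FF (NN O w) (gg O (x.count none)) (tagW O (x.count none) y) ∧
      Sw O w' = (g2 0 (tagW O 0 x) ++
        List.replicate (gg O (x.count none) - fmax 0 (tagW O 0 x)) none) ++
        FF (NN O w) (gg O (x.count none)) (tagW O (x.count none) y) := by
  set c := x.count none with hc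
  set t := gg O c with ht
  set P := tagW O 0 x with hP
  set Y := tagW O c y with hY
  set N := NN O w with hN
  have hcnt : w.count none = c + y.count none := by
    rw [hw, List.count_append, List.count_cons_of_ne (by simp),
      List.count_cons_of_ne (by simp)]
  have hcnt' : w'.count none = w.count none := by
    rw [hw', List.count_append, hcnt]
  have hNN' : NN O w' = N := by
    rw [hN]; unfold NN; rw [hcnt']
  have htN : t ≤ N - 1 := by
    rw [NN_sub_one]
    have := gg_le O c
    omega
  have hoP : fmax 0 P ≤ t := by
    apply fmax_le
    · exact Nat.zero_le _
    · intro pr hpr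
      have := mem_tagW_le O x 0 pr hpr
      simpa using this
  have hYge : ∀ pr ∈ Y, t ≤ pr.2 := fun pr hpr => mem_tagW_ge O y c pr hpr
  constructor
  · rw [show Sw O w = FF N 0 (tagW O 0 w) from rfl, hw, tagW_append, tagW_cons2]
    simp only [Nat.zero_add]
    rw [← hc, ← ht, ← hP, ← hY, FF_append, FF_block2 N hoP, ← List.append_assoc]
  · rw [show Sw O w' = FF (NN O w') 0 (tagW O 0 w') from rfl, hNN', hw', tagW_append]
    simp only [Nat.zero_add]
    rw [← hc, ← hP, ← hY, FF_append,
      FF_reabsorb N Y (fmax 0 P) t hoP htN hYge, ← List.append_assoc]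

/-- Σ of a two-block decomposition (for H2 moves) -/
lemma Sw_two_block {w w' x y z : List (Option ℕ)} {a b b' a' : ℕ}
    (hw : w = x ++ some a :: some b :: (y ++ some b' :: some a' :: z))
    (hw' : w' = x ++ (y ++ z)) :
    ∃ u v r : List (Option ℕ),
      Sw O w = u ++ some a :: some b :: (v ++ some b' :: some a' :: r) ∧
      Sw O w' = u ++ (v ++ r) := by
  set c1 := x.count none with hc1
  set t1 := gg O c1 with ht1
  set c2 := c1 + y.count none with hc2
  set t2 := gg O c2 with ht2
  set P := tagW O 0 x with hP
  set Q := tagW O c1 y with hQ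
  set R := tagW O c2 z with hR
  set N := NN O w with hN
  set oP := fmax 0 P with hoPd
  set oQ := fmax t1 Q with hoQd
  have hcnt : w.count none = c2 + z.count none := by
    rw [hw, List.count_append, List.count_cons_of_ne (by simp),
      List.count_cons_of_ne (by simp), List.count_append,
      List.count_cons_of_ne (by simp), List.count_cons_of_ne (by simp)]
    omega
  have hcnt' : w'.count none = w.count none := by
    rw [hw', List.count_append, List.count_append, hcnt]
    omega
  have hNN' : NN O w' = N := by rw [hN]; unfold NN; rw [hcnt']
  have ht12 : t1 ≤ t2 := gg_mono O (by omega)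
  have ht2N : t2 ≤ N - 1 := by
    rw [NN_sub_one]
    have := gg_le O c2
    omega
  have ht1N : t1 ≤ N - 1 := le_trans ht12 ht2N
  have hoP : oP ≤ t1 := by
    apply fmax_le
    · exact Nat.zero_le _
    · intro pr hpr
      have := mem_tagW_le O x 0 pr hpr
      simpa using this
  have hQle : ∀ pr ∈ Q, pr.2 ≤ t2 := by
    intro pr hpr
    have := mem_tagW_le O y c1 pr hpr
    rwa [← hc2, ← ht2] at this
  have hoQ : oQ ≤ t2 := fmax_le _ _ _ ht12 hQle
  have hQge : ∀ pr ∈ Q, t1 ≤ pr.2 := fun pr hpr => mem_tagW_ge O y c1 pr hpr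
  have hRge2 : ∀ pr ∈ R, t2 ≤ pr.2 := fun pr hpr => mem_tagW_ge O z c2 pr hpr
  have hRge1 : ∀ pr ∈ R, t1 ≤ pr.2 := fun pr hpr => ht12.trans (hRge2 pr hpr)
  have htag : tagW O 0 w = P ++ (a, t1) :: (b, t1) :: (Q ++ (b', t2) :: (a', t2) :: R) := by
    rw [hw, tagW_append, tagW_cons2, tagW_append, tagW_cons2]
    simp only [Nat.zero_add]
    rfl
  have htag' : tagW O 0 w' = P ++ (Q ++ R) := by
    rw [hw', tagW_append, tagW_append]
    simp only [Nat.zero_add]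
    rfl
  refine ⟨g2 0 P ++ List.replicate (t1 - oP) none,
    g2 t1 Q ++ List.replicate (t2 - oQ) none, FF N t2 R, ?_, ?_⟩
  · rw [show Sw O w = FF N 0 (tagW O 0 w) from rfl, htag, FF_append, ← hoPd,
      FF_block2 N hoP, FF_append, ← hoQd, FF_block2 N hoQ]
    simp [List.append_assoc]
  · rw [show Sw O w' = FF (NN O w') 0 (tagW O 0 w') from rfl, hNN', htag', FF_append, ← hoPd,
      FF_append, gshift N Q oP t1 R hoP ht1N hQge hRge1,
      FF_reabsorb N R (fmax t1 Q) t2 (by rw [← hoQd]; exact hoQ) ht2N hRge2]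
    simp [List.append_assoc, ← hoQd]

/-- Σ of a three-block decomposition (for H3 moves): the context is independent of the
letters in the blocks -/
lemma Sw_three_block (x y z tt : List (Option ℕ)) :
    ∃ u v w r : List (Option ℕ), ∀ p1 p2 q1 q2 r1 r2 : ℕ,
      Sw O (x ++ some p1 :: some p2 :: (y ++ some q1 :: some q2 ::
          (z ++ some r1 :: some r2 :: tt))) =
        u ++ some p1 :: some p2 :: (v ++ some q1 :: some q2 ::
          (w ++ some r1 :: some r2 :: r)) := by
  set c1 := x.count none with hc1
  set t1 := gg O c1 with ht1
  set c2 := c1 + y.count none with hc2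
  set t2 := gg O c2 with ht2
  set c3 := c2 + z.count none with hc3
  set t3 := gg O c3 with ht3
  set P := tagW O 0 x with hP
  set Q := tagW O c1 y with hQ
  set R := tagW O c2 z with hR
  set T := tagW O c3 tt with hT
  set N := max ((c3 + tt.count none) + 1) (hsO O + 1) with hN
  set oP := fmax 0 P with hoPd
  set oQ := fmax t1 Q with hoQd
  set oR := fmax t2 R with hoRd
  have hoP : oP ≤ t1 := by
    apply fmax_le
    · exact Nat.zero_le _
    · intro pr hpr
      have := mem_tagW_le O x 0 pr hpr
      simpa using this
  have hoQ : oQ ≤ t2 := by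
    apply fmax_le _ _ _ (gg_mono O (by omega))
    intro pr hpr
    have := mem_tagW_le O y c1 pr hpr
    rwa [← hc2, ← ht2] at this
  have hoR : oR ≤ t3 := by
    apply fmax_le _ _ _ (gg_mono O (by omega))
    intro pr hpr
    have := mem_tagW_le O z c2 pr hpr
    rwa [← hc3, ← ht3] at this
  refine ⟨g2 0 P ++ List.replicate (t1 - oP) none,
    g2 t1 Q ++ List.replicate (t2 - oQ) none,
    g2 t2 R ++ List.replicate (t3 - oR) none, FF N t3 T, ?_⟩
  intro p1 p2 q1 q2 r1 r2
  have hcnt : (x ++ some p1 :: some p2 :: (y ++ some q1 :: some q2 ::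
      (z ++ some r1 :: some r2 :: tt))).count none = c3 + tt.count none := by
    simp only [List.count_append, List.count_cons_of_ne (by simp : ¬(some _ = none)),
      List.count_cons]
    simp only [hc3, hc2, hc1]
    omega
  have hNN : NN O (x ++ some p1 :: some p2 :: (y ++ some q1 :: some q2 ::
      (z ++ some r1 :: some r2 :: tt))) = N := by
    unfold NN
    rw [hcnt, hN]
  have htag : tagW O 0 (x ++ some p1 :: some p2 :: (y ++ some q1 :: some q2 ::
      (z ++ some r1 :: some r2 :: tt))) =
      P ++ (p1, t1) :: (p2, t1) :: (Q ++ (q1, t2) :: (q2, t2) ::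
        (R ++ (r1, t3) :: (r2, t3) :: T)) := by
    rw [tagW_append, tagW_cons2, tagW_append, tagW_cons2, tagW_append, tagW_cons2]
    simp only [Nat.zero_add]
    rfl
  rw [show Sw O (x ++ some p1 :: some p2 :: (y ++ some q1 :: some q2 ::
      (z ++ some r1 :: some r2 :: tt))) = FF (NN O _) 0 (tagW O 0 _) from rfl, hNN, htag,
    FF_append, ← hoPd, FF_block2 N hoP, FF_append, ← hoQd, FF_block2 N hoQ,
    FF_append, ← hoRd, FF_block2 N hoR]
  simp [List.append_assoc]

end EdgeLemma

section Main
open Phrase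

variable {α : Type} (O : Finset ℕ) (τ : α → α) (S : Set (α × α × α))

lemma edge_map {q q' : Phrase α} (h : Isom q q' ∨ Move τ S q q') :
    Isom (SPhr O q) (SPhr O q') ∨ Move τ S (SPhr O q) (SPhr O q') := by
  rcases h with ⟨f, hw, hproj⟩ | ⟨hproj, hmv⟩
  · left
    refine ⟨f, ?_, ?_⟩
    · show Sw O q'.word = (Sw O q.word).map (Option.map f)
      rw [hw, Sw_map]
    · intro A hA
      exact hproj A (mem_Sw O hA)
  · right
    refine ⟨hproj, ?_⟩
    rcases hmv with ⟨x, y, A, hw, hw'⟩ | ⟨x, y, z, A, B, hτAB, hw, hw'⟩ |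
      ⟨x, y, z, t, A, B, C, hS, hw, hw'⟩
    · left
      obtain ⟨h1, h2⟩ := Sw_one_block O hw hw'
      exact ⟨_, _, A, h1, h2⟩
    · right; left
      obtain ⟨u, v, r, h1, h2⟩ := Sw_two_block O hw hw'
      exact ⟨u, v, r, A, B, hτAB, h1, h2⟩
    · right; right
      obtain ⟨u, v, w2, r, hall⟩ := Sw_three_block O x y z t
      refine ⟨u, v, w2, r, A, B, C, hS, ?_, ?_⟩
      · show Sw O q.word = _
        rw [hw]
        exact hall A B A C B C
      · show Sw O q'.word = _
        rw [hw']
        exact hall B A C A C B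

lemma homotopyO_SPhr {q q' : Phrase α} (h : Homotopy τ S q q') :
    HomotopyO τ S O (SPhr O q) (SPhr O q') := by
  induction h with
  | rel a b hab =>
    exact Relation.EqvGen.rel _ _ ⟨edge_map O τ S hab, inPO_SPhr O a, inPO_SPhr O b⟩
  | refl a => exact Relation.EqvGen.refl _
  | symm a b _ ih => exact Relation.EqvGen.symm _ _ ih
  | trans a b c _ _ ih1 ih2 => exact Relation.EqvGen.trans _ _ _ ih1 ih2

lemma word_eq_replicate_of_inPO (q : Phrase α) (hq : InPO O q)
    (hall : ∀ k, k < q.numComps → k ∈ O) :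
    q.word = List.replicate (q.word.count none) none := by
  have hnone : ∀ o ∈ q.word, o = none := by
    intro o ho
    cases o with
    | none => rfl
    | some a =>
      obtain ⟨x, y, hxy⟩ := List.append_of_mem ho
      have hmem := mem_comp_of_split x a y
      rw [← hxy] at hmem
      have hlen : (compsOf q.word).length = q.word.count none + 1 := length_compsOf _
      have hxc : x.count none ≤ q.word.count none := by
        rw [hxy, List.count_append]
        omega
      have hlt : x.count none < q.numComps := by
        rw [Phrase.numComps, hlen]
        omega
      have hcomp := hq _ (hall _ hlt)
      rw [Phrase.comp] at hcomp
      rw [hcomp] at hmem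
      exact absurd hmem List.not_mem_nil
  have hlen : q.word.count none = q.word.length := by
    rw [List.count_eq_length]
    intro b hb
    exact (hnone b hb).symm
  rw [hlen]
  apply List.eq_replicate_of_mem
  exact hnone

end Main

end SigProof



open Phrase in
/-- if `p, p' ∈ P_n(α, O)` and `p ∼ p'`, then `p ∼_O p'`. -/
theorem stmt1 {α : Type} [Finite α] [Nonempty α]
    (τ : α → α) (hτ : ∀ a : α, τ (τ a) = a) (S : Set (α × α × α))
    (n : ℕ) (O : Finset ℕ) (hO : ∀ i ∈ O, i < n)
    (p p' : Phrase α) (hg : p.IsGauss) (hg' : p'.IsGauss)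
    (hn : p.numComps = n) (hn' : p'.numComps = n)
    (hp : InPO O p) (hp' : InPO O p')
    (h : Homotopy τ S p p') :
    HomotopyO τ S O p p' := by
  classical
  have hlenp : (compsOf p.word).length = p.word.count none + 1 := SigProof.length_compsOf _
  have hlenp' : (compsOf p'.word).length = p'.word.count none + 1 := SigProof.length_compsOf _
  rw [numComps] at hn hn'
  have hc : p.word.count none = n - 1 := by omega
  have hc' : p'.word.count none = n - 1 := by omega
  have hn1 : 1 ≤ n := by omega
  by_cases hcase : SigProof.hsO O ≤ n - 1
  · have h1 : SigProof.SPhr O p = p := SigProof.SPhr_id O p hp (by omega)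
    have h2 : SigProof.SPhr O p' = p' := SigProof.SPhr_id O p' hp' (by omega)
    have hh := SigProof.homotopyO_SPhr O τ S h
    rwa [h1, h2] at hh
  · push_neg at hcase
    have hallp : ∀ k, k < p.numComps → k ∈ O := by
      intro k hk
      by_contra hkO
      have := SigProof.hsO_min O hkO
      rw [Phrase.numComps, hn] at hk
      omega
    have hallp' : ∀ k, k < p'.numComps → k ∈ O := by
      intro k hk
      by_contra hkO
      have := SigProof.hsO_min O hkO
      rw [Phrase.numComps, hn'] at hk
      omega
    have hwp := SigProof.word_eq_replicate_of_inPO O p hp hallp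
    have hwp' := SigProof.word_eq_replicate_of_inPO O p' hp' hallp'
    have hweq : p'.word = p.word := by
      rw [hwp, hwp', hc, hc']
    refine Relation.EqvGen.rel _ _ ⟨Or.inl ⟨1, ?_, ?_⟩, hp, hp'⟩
    · rw [show ⇑(1 : Equiv.Perm ℕ) = id from rfl, Option.map_id, List.map_id]
      exact hweq
    · intro A hA
      rw [hwp] at hA
      rw [List.mem_replicate] at hA
      exact absurd hA.2 (by simp)
end

section
/- Suppose the homotopy data triple h is (isomorphic to) the product of homotopy data triples f and g, and suppose k is a prime factor of h. Then k is a factor of f or a factor of g. -/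
/-- A homotopy data triple: a finite set `α` (here: a finite type), an involution `τ`
on it, and a subset `S ⊆ α × α × α`. -/
structure HDT where
  carrier : Type
  finite : Finite carrier
  tau : carrier → carrier
  tau_inv : ∀ a, tau (tau a) = a
  S : Set (carrier × carrier × carrier)

namespace HDT

/-- Isomorphism of homotopy data triples. -/
def Iso (f g : HDT) : Prop :=
  ∃ e : f.carrier ≃ g.carrier,
    (∀ a, e (f.tau a) = g.tau (e a)) ∧
    (∀ a b c, (a, b, c) ∈ f.S ↔ (e a, e b, e c) ∈ g.S)

/-- The restriction of a homotopy data triple to a `τ`-invariant subset `β`: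
the triple `(β, τ|β, S ∩ β³)`. -/
def restrict (h : HDT) (β : Set h.carrier) (hβ : ∀ a ∈ β, h.tau a ∈ β) : HDT where
  carrier := { a : h.carrier // a ∈ β }
  finite := by haveI := h.finite; exact Subtype.finite
  tau := fun x => ⟨h.tau x.1, hβ x.1 x.2⟩
  tau_inv := fun x => Subtype.ext (h.tau_inv x.1)
  S := { t | (t.1.1, t.2.1.1, t.2.2.1) ∈ h.S }

/-- `S` splits along `β`: every triple of `S` lies entirely in `β³` or entirely in
`(α − β)³`. -/
def Splits (h : HDT) (β : Set h.carrier) : Prop :=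
  ∀ t ∈ h.S, (t.1 ∈ β ∧ t.2.1 ∈ β ∧ t.2.2 ∈ β) ∨ (t.1 ∉ β ∧ t.2.1 ∉ β ∧ t.2.2 ∉ β)

/-- `k` is a factor of `h`: `k` is (isomorphic to) the restriction of `h` to some
`τ`-invariant subset `β` along which `S` splits. -/
def IsFactorOf (k h : HDT) : Prop :=
  ∃ (β : Set h.carrier) (hβ : ∀ a ∈ β, h.tau a ∈ β),
    h.Splits β ∧ Iso k (h.restrict β hβ)

/-- A homotopy data triple is composite if it has a proper factor. -/
def IsComposite (h : HDT) : Prop :=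
  ∃ β : Set h.carrier,
    (∀ a ∈ β, h.tau a ∈ β) ∧ h.Splits β ∧ β.Nonempty ∧ β ≠ Set.univ

/-- A homotopy data triple is prime if its underlying set is nonempty and it has no
proper factor. -/
def IsPrime (h : HDT) : Prop := Nonempty h.carrier ∧ ¬ h.IsComposite

/-- The product of two homotopy data triples (carried by the disjoint union of the
underlying sets). -/
def prod (f g : HDT) : HDT where
  carrier := f.carrier ⊕ g.carrier
  finite := by haveI := f.finite; haveI := g.finite; exact inferInstance
  tau := Sum.map f.tau g.tau
  tau_inv := by
    intro a
    cases a with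
    | inl x => simp [Sum.map, f.tau_inv]
    | inr x => simp [Sum.map, g.tau_inv]
  S := { t |
    (∃ a b c, (a, b, c) ∈ f.S ∧ t = (Sum.inl a, Sum.inl b, Sum.inl c)) ∨
    (∃ a b c, (a, b, c) ∈ g.S ∧ t = (Sum.inr a, Sum.inr b, Sum.inr c)) }

/-- The unit for the product: the empty homotopy data triple. -/
def unit : HDT where
  carrier := Empty
  finite := inferInstance
  tau := id
  tau_inv := fun a => rfl
  S := ∅

/-- The product of a finite list of homotopy data triples. -/
def listProd : List HDT → HDT
  | [] => unit
  | h :: t => h.prod (listProd t)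

end HDT

namespace HDT

lemma iso_trans {a b c : HDT} (h1 : Iso a b) (h2 : Iso b c) : Iso a c := by
  obtain ⟨e1, ht1, hs1⟩ := h1
  obtain ⟨e2, ht2, hs2⟩ := h2
  exact ⟨e1.trans e2, fun x => by simp [ht1, ht2], fun x y z => by
    simp only [Equiv.trans_apply]; rw [hs1, hs2]⟩

lemma iso_symm {a b : HDT} (h1 : Iso a b) : Iso b a := by
  obtain ⟨e, ht, hs⟩ := h1
  refine ⟨e.symm, ?_, ?_⟩
  · intro x
    apply e.injective
    rw [e.apply_symm_apply, ht, e.apply_symm_apply]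
  · intro x y z
    rw [hs, e.apply_symm_apply, e.apply_symm_apply, e.apply_symm_apply]

lemma composite_of_iso {a b : HDT} (h : Iso a b) (hb : b.IsComposite) :
    a.IsComposite := by
  obtain ⟨e, ht, hs⟩ := h
  obtain ⟨β, hβ, hsp, hne, hproper⟩ := hb
  refine ⟨e ⁻¹' β, ?_, ?_, ?_, ?_⟩
  · intro x hx
    simp only [Set.mem_preimage] at *
    rw [ht]
    exact hβ _ hx
  · intro t htS
    have := hsp (e t.1, e t.2.1, e t.2.2) ((hs t.1 t.2.1 t.2.2).mp htS)
    simpa using this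
  · obtain ⟨x, hx⟩ := hne
    exact ⟨e.symm x, by simp [Set.mem_preimage, hx]⟩
  · intro hcontra
    apply hproper
    ext y
    simp only [Set.mem_univ, iff_true]
    have : e.symm y ∈ e ⁻¹' β := hcontra ▸ Set.mem_univ _
    simpa using this

lemma isFactorOf_of_iso {k h h' : HDT} (hi : Iso h h') (hf : k.IsFactorOf h) :
    k.IsFactorOf h' := by
  obtain ⟨e, ht, hs⟩ := hi
  obtain ⟨β, hβ, hsp, hiso⟩ := hf
  have hβ' : ∀ b ∈ e.symm ⁻¹' β, h'.tau b ∈ e.symm ⁻¹' β := by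
    intro b hb
    simp only [Set.mem_preimage] at *
    have heq : e.symm (h'.tau b) = h.tau (e.symm b) := by
      apply e.injective
      rw [e.apply_symm_apply, ht, e.apply_symm_apply]
    rw [heq]
    exact hβ _ hb
  refine ⟨e.symm ⁻¹' β, hβ', ?_, ?_⟩
  · intro t htS
    have h2 : (e.symm t.1, e.symm t.2.1, e.symm t.2.2) ∈ h.S := by
      rw [hs, e.apply_symm_apply, e.apply_symm_apply, e.apply_symm_apply]
      exact htS
    have := hsp _ h2
    simpa using this
  · refine iso_trans hiso ⟨e.subtypeEquiv (fun a => by simp), ?_, ?_⟩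
    · intro a
      apply Subtype.ext
      exact ht a.1
    · intro a b c
      exact hs a.1 b.1 c.1

lemma nonempty_of_iso {a b : HDT} (h : Iso a b) (ha : Nonempty a.carrier) :
    Nonempty b.carrier := by
  obtain ⟨e, _, _⟩ := h
  exact ⟨e ha.some⟩

/-- If `β` lies entirely in the left summand, the restriction of a product to `β`
is isomorphic to the restriction of the left factor to the preimage of `β`. -/
lemma restrict_prod_inl (f g : HDT) (β : Set (f.prod g).carrier)
    (hβ : ∀ a ∈ β, (f.prod g).tau a ∈ β)
    (hβ' : ∀ a ∈ (Sum.inl ⁻¹' β : Set f.carrier), f.tau a ∈ Sum.inl ⁻¹' β)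
    (hr : ∀ x ∈ β, ∃ a, x = Sum.inl a) :
    Iso ((f.prod g).restrict β hβ) (f.restrict (Sum.inl ⁻¹' β) hβ') := by
  apply iso_symm
  have hG : Function.Bijective
      (fun a : {a : f.carrier // a ∈ Sum.inl ⁻¹' β} =>
        (⟨Sum.inl a.1, a.2⟩ : {x : (f.prod g).carrier // x ∈ β})) := by
    constructor
    · intro x y hxy
      apply Subtype.ext
      exact Sum.inl.inj (congrArg Subtype.val hxy)
    · rintro ⟨x, hx⟩
      obtain ⟨a, rfl⟩ := hr x hx
      exact ⟨⟨a, hx⟩, rfl⟩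
  refine ⟨Equiv.ofBijective _ hG, ?_, ?_⟩
  · intro a
    apply Subtype.ext
    rfl
  · intro a b c
    show (a.1, b.1, c.1) ∈ f.S ↔
      ((Sum.inl a.1 : f.carrier ⊕ g.carrier), Sum.inl b.1, Sum.inl c.1) ∈ (f.prod g).S
    constructor
    · intro hS
      exact Or.inl ⟨a.1, b.1, c.1, hS, rfl⟩
    · rintro (⟨a', b', c', hS, heq⟩ | ⟨a', b', c', hS, heq⟩)
      · simp only [Prod.mk.injEq, Sum.inl.injEq] at heq
        obtain ⟨h1, h2, h3⟩ := heq
        subst h1; subst h2; subst h3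
        exact hS
      · simp at heq

lemma restrict_prod_inr (f g : HDT) (β : Set (f.prod g).carrier)
    (hβ : ∀ a ∈ β, (f.prod g).tau a ∈ β)
    (hβ' : ∀ a ∈ (Sum.inr ⁻¹' β : Set g.carrier), g.tau a ∈ Sum.inr ⁻¹' β)
    (hr : ∀ x ∈ β, ∃ a, x = Sum.inr a) :
    Iso ((f.prod g).restrict β hβ) (g.restrict (Sum.inr ⁻¹' β) hβ') := by
  apply iso_symm
  have hG : Function.Bijective
      (fun a : {a : g.carrier // a ∈ Sum.inr ⁻¹' β} =>
        (⟨Sum.inr a.1, a.2⟩ : {x : (f.prod g).carrier // x ∈ β})) := by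
    constructor
    · intro x y hxy
      apply Subtype.ext
      exact Sum.inr.inj (congrArg Subtype.val hxy)
    · rintro ⟨x, hx⟩
      obtain ⟨a, rfl⟩ := hr x hx
      exact ⟨⟨a, hx⟩, rfl⟩
  refine ⟨Equiv.ofBijective _ hG, ?_, ?_⟩
  · intro a
    apply Subtype.ext
    rfl
  · intro a b c
    show (a.1, b.1, c.1) ∈ g.S ↔
      ((Sum.inr a.1 : f.carrier ⊕ g.carrier), Sum.inr b.1, Sum.inr c.1) ∈ (f.prod g).S
    constructor
    · intro hS
      exact Or.inr ⟨a.1, b.1, c.1, hS, rfl⟩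
    · rintro (⟨a', b', c', hS, heq⟩ | ⟨a', b', c', hS, heq⟩)
      · simp at heq
      · simp only [Prod.mk.injEq, Sum.inr.injEq] at heq
        obtain ⟨h1, h2, h3⟩ := heq
        subst h1; subst h2; subst h3
        exact hS

end HDT

/-- if `h` is (isomorphic to) the product of `f` and `g` and `k` is a prime
factor of `h`, then `k` is a factor of `f` or of `g`. -/
theorem stmt6 (f g h k : HDT) (hiso : h.Iso (f.prod g)) (hk : k.IsPrime)
    (hfac : k.IsFactorOf h) :
    k.IsFactorOf f ∨ k.IsFactorOf g := by
  have hfac' : k.IsFactorOf (f.prod g) := HDT.isFactorOf_of_iso hiso hfac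
  obtain ⟨β, hβ, hsp, hkiso⟩ := hfac'
  -- β cannot contain both an `inl` and an `inr` element, else `k` would be composite.
  have hpure : (∀ x ∈ β, ∃ a, x = (Sum.inl a : f.carrier ⊕ g.carrier)) ∨
      (∀ x ∈ β, ∃ a, x = (Sum.inr a : f.carrier ⊕ g.carrier)) := by
    by_contra hcon
    rw [not_or] at hcon
    obtain ⟨h1, h2⟩ := hcon
    obtain ⟨x, hx'⟩ := not_forall.mp h1
    obtain ⟨hx, hxl⟩ := Classical.not_imp.mp (by
      intro himp; exact hx' fun hmem => himp hmem)
    obtain ⟨y, hy'⟩ := not_forall.mp h2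
    obtain ⟨hy, hyr⟩ := Classical.not_imp.mp (by
      intro himp; exact hy' fun hmem => himp hmem)
    -- x is an inr element, y is an inl element
    obtain ⟨xb, rfl⟩ : ∃ b, x = (Sum.inr b : f.carrier ⊕ g.carrier) := by
      cases x with
      | inl a => exact absurd ⟨a, rfl⟩ hxl
      | inr b => exact ⟨b, rfl⟩
    obtain ⟨ya, rfl⟩ : ∃ a, y = (Sum.inl a : f.carrier ⊕ g.carrier) := by
      cases y with
      | inl a => exact ⟨a, rfl⟩
      | inr b => exact absurd ⟨b, rfl⟩ hyr
    apply hk.2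
    apply HDT.composite_of_iso hkiso
    refine ⟨{z : {x : (f.prod g).carrier // x ∈ β} | ∃ a, z.1 = Sum.inl a}, ?_, ?_, ?_, ?_⟩
    · rintro ⟨z, hz⟩ ⟨a, ha⟩
      simp only at ha
      subst ha
      exact ⟨f.tau a, rfl⟩
    · rintro ⟨⟨t1, ht1⟩, ⟨t2, ht2⟩, ⟨t3, ht3⟩⟩ hS
      rcases hS with ⟨a', b', c', _, heq⟩ | ⟨a', b', c', _, heq⟩
      · left
        have heq := (Prod.mk.inj heq).imp id Prod.mk.inj
        exact ⟨⟨a', heq.1⟩, ⟨b', heq.2.1⟩, ⟨c', heq.2.2⟩⟩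
      · right
        have heq : t1 = Sum.inr a' ∧ t2 = Sum.inr b' ∧ t3 = Sum.inr c' :=
          (Prod.mk.inj heq).imp id Prod.mk.inj
        refine ⟨?_, ?_, ?_⟩
        · rintro ⟨a, ha⟩
          have ha' : t1 = Sum.inl a := ha
          rw [heq.1] at ha'; simp at ha'
        · rintro ⟨a, ha⟩
          have ha' : t2 = Sum.inl a := ha
          rw [heq.2.1] at ha'; simp at ha'
        · rintro ⟨a, ha⟩
          have ha' : t3 = Sum.inl a := ha
          rw [heq.2.2] at ha'; simp at ha'
    · exact ⟨⟨Sum.inl ya, hy⟩, ⟨ya, rfl⟩⟩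
    · intro hcontra
      have : (⟨Sum.inr xb, hx⟩ : {x : (f.prod g).carrier // x ∈ β}) ∈
          {z : {x : (f.prod g).carrier // x ∈ β} | ∃ a, z.1 = Sum.inl a} :=
        hcontra ▸ Set.mem_univ _
      obtain ⟨a, ha⟩ := this
      simp at ha
  rcases hpure with hl | hr
  · left
    have hβ' : ∀ a ∈ (Sum.inl ⁻¹' β : Set f.carrier), f.tau a ∈ Sum.inl ⁻¹' β := by
      intro a ha
      exact hβ (Sum.inl a) ha
    refine ⟨Sum.inl ⁻¹' β, hβ', ?_, ?_⟩
    · intro t htS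
      have hmem : ((Sum.inl t.1 : f.carrier ⊕ g.carrier), Sum.inl t.2.1, Sum.inl t.2.2) ∈
          (f.prod g).S := Or.inl ⟨t.1, t.2.1, t.2.2, htS, rfl⟩
      have := hsp _ hmem
      exact this
    · exact HDT.iso_trans hkiso (HDT.restrict_prod_inl f g β hβ hβ' hl)
  · right
    have hβ' : ∀ a ∈ (Sum.inr ⁻¹' β : Set g.carrier), g.tau a ∈ Sum.inr ⁻¹' β := by
      intro a ha
      exact hβ (Sum.inr a) ha
    refine ⟨Sum.inr ⁻¹' β, hβ', ?_, ?_⟩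
    · intro t htS
      have hmem : ((Sum.inr t.1 : f.carrier ⊕ g.carrier), Sum.inr t.2.1, Sum.inr t.2.2) ∈
          (f.prod g).S := Or.inr ⟨t.1, t.2.1, t.2.2, htS, rfl⟩
      have := hsp _ hmem
      exact this
    · exact HDT.iso_trans hkiso (HDT.restrict_prod_inr f g β hβ hβ' hr)
end

section
/- Let h be a prime homotopy data triple and let h₁,…,hₙ be prime homotopy data triples with product k. If h is a factor of k, then h is isomorphic to one of the hᵢ. -/
namespace HDT

theorem Iso.symm {f g : HDT} (h : f.Iso g) : g.Iso f := by
  obtain ⟨e, h1, h2⟩ := h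
  refine ⟨e.symm, fun a => e.injective ?_, fun a b c => ?_⟩
  · rw [Equiv.apply_symm_apply, h1, Equiv.apply_symm_apply]
  · rw [h2]
    simp

theorem Iso.trans {f g k : HDT} (h1 : f.Iso g) (h2 : g.Iso k) : f.Iso k := by
  obtain ⟨e, e1, e2⟩ := h1; obtain ⟨u, u1, u2⟩ := h2
  exact ⟨e.trans u, fun a => by simp [e1, u1], fun a b c => by simp [e2 a b c, u2]⟩

theorem IsComposite.of_iso {f g : HDT} (hiso : f.Iso g) (hc : g.IsComposite) :
    f.IsComposite := by
  obtain ⟨e, e1, e2⟩ := hiso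
  obtain ⟨β, hβ, hs, hne, hnu⟩ := hc
  refine ⟨e ⁻¹' β, ?_, ?_, ?_, ?_⟩
  · intro a ha
    simp only [Set.mem_preimage] at *
    rw [e1]; exact hβ _ ha
  · rintro ⟨a, b, c⟩ ht
    have := hs (e a, e b, e c) ((e2 a b c).1 ht)
    simpa using this
  · obtain ⟨b, hb⟩ := hne
    exact ⟨e.symm b, by simp [hb]⟩
  · intro hu
    apply hnu
    ext b
    simp only [Set.mem_univ, iff_true]
    have : e.symm b ∈ e ⁻¹' β := hu ▸ Set.mem_univ _
    simpa using this

theorem restrict_univ_iso (h : HDT)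
    (hβ : ∀ a ∈ (Set.univ : Set h.carrier), h.tau a ∈ (Set.univ : Set h.carrier)) :
    (h.restrict Set.univ hβ).Iso h :=
  ⟨Equiv.Set.univ _, fun _ => rfl, fun _ _ _ => Iff.rfl⟩

theorem iso_of_prime_factor {h x : HDT} (hh : h.IsPrime) (hx : x.IsPrime)
    (hf : h.IsFactorOf x) : h.Iso x := by
  obtain ⟨β, hβ, hs, hiso⟩ := hf
  have hne : β.Nonempty := by
    obtain ⟨e, -, -⟩ := hiso
    obtain ⟨a⟩ := hh.1
    exact ⟨(e a).1, (e a).2⟩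
  have huniv : β = Set.univ := by
    by_contra hne'
    exact hx.2 ⟨β, hβ, hs, hne, hne'⟩
  subst huniv
  exact hiso.trans (restrict_univ_iso x hβ)

theorem factor_left {h : HDT} (f g : HDT) (β : Set (f.prod g).carrier)
    (hβ : ∀ a ∈ β, (f.prod g).tau a ∈ β) (hs : (f.prod g).Splits β)
    (hiso : h.Iso ((f.prod g).restrict β hβ))
    (hleft : ∀ a ∈ β, ∃ y, a = Sum.inl y) : h.IsFactorOf f := by
  set β₁ : Set f.carrier := {a | Sum.inl a ∈ β} with hβ₁def
  have hβ₁ : ∀ a ∈ β₁, f.tau a ∈ β₁ := fun a ha => hβ _ ha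
  have hs₁ : f.Splits β₁ := by
    rintro ⟨a, b, c⟩ ht
    exact hs _ (Or.inl ⟨a, b, c, ht, rfl⟩)
  have hinj : Function.Injective
      (fun (p : {a // a ∈ β₁}) => (⟨Sum.inl p.1, p.2⟩ : {a // a ∈ β})) := by
    intro p q hpq
    exact Subtype.ext (Sum.inl_injective (congrArg Subtype.val hpq))
  have hsurj : Function.Surjective
      (fun (p : {a // a ∈ β₁}) => (⟨Sum.inl p.1, p.2⟩ : {a // a ∈ β})) := by
    rintro ⟨a, ha⟩
    obtain ⟨y, rfl⟩ := hleft a ha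
    exact ⟨⟨y, ha⟩, rfl⟩
  have hiso' : (f.restrict β₁ hβ₁).Iso ((f.prod g).restrict β hβ) := by
    refine ⟨Equiv.ofBijective _ ⟨hinj, hsurj⟩, fun p => rfl, fun a b c => ?_⟩
    change {x // x ∈ β₁} at a b c
    change (a.1, b.1, c.1) ∈ f.S ↔ ((Sum.inl a.1, Sum.inl b.1, Sum.inl c.1) :
      (f.prod g).carrier × (f.prod g).carrier × (f.prod g).carrier) ∈ (f.prod g).S
    constructor
    · intro ht
      exact Or.inl ⟨a.1, b.1, c.1, ht, rfl⟩
    · rintro (⟨a', b', c', ht, heq⟩ | ⟨a', b', c', ht, heq⟩)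
      · replace heq : (Sum.inl a.1 : (f.carrier ⊕ g.carrier)) = Sum.inl a' ∧ (Sum.inl b.1 : (f.carrier ⊕ g.carrier)) = Sum.inl b' ∧
            (Sum.inl c.1 : (f.carrier ⊕ g.carrier)) = Sum.inl c' :=
          ⟨congrArg Prod.fst heq, congrArg (fun z => z.2.1) heq, congrArg (fun z => z.2.2) heq⟩
        obtain ⟨h1, h2, h3⟩ := heq
        show (a.1, b.1, c.1) ∈ f.S
        rw [Sum.inl_injective h1, Sum.inl_injective h2, Sum.inl_injective h3]
        exact ht
      · replace heq : (Sum.inl a.1 : (f.carrier ⊕ g.carrier)) = Sum.inr a' ∧ (Sum.inl b.1 : (f.carrier ⊕ g.carrier)) = Sum.inr b' ∧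
            (Sum.inl c.1 : (f.carrier ⊕ g.carrier)) = Sum.inr c' :=
          ⟨congrArg Prod.fst heq, congrArg (fun z => z.2.1) heq, congrArg (fun z => z.2.2) heq⟩
        exact absurd heq.1 (by simp)
  exact ⟨β₁, hβ₁, hs₁, hiso.trans hiso'.symm⟩

theorem factor_right {h : HDT} (f g : HDT) (β : Set (f.prod g).carrier)
    (hβ : ∀ a ∈ β, (f.prod g).tau a ∈ β) (hs : (f.prod g).Splits β)
    (hiso : h.Iso ((f.prod g).restrict β hβ))
    (hright : ∀ a ∈ β, ∃ y, a = Sum.inr y) : h.IsFactorOf g := by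
  set β₂ : Set g.carrier := {a | Sum.inr a ∈ β} with hβ₂def
  have hβ₂ : ∀ a ∈ β₂, g.tau a ∈ β₂ := fun a ha => hβ _ ha
  have hs₂ : g.Splits β₂ := by
    rintro ⟨a, b, c⟩ ht
    exact hs _ (Or.inr ⟨a, b, c, ht, rfl⟩)
  have hinj : Function.Injective
      (fun (p : {a // a ∈ β₂}) => (⟨Sum.inr p.1, p.2⟩ : {a // a ∈ β})) := by
    intro p q hpq
    exact Subtype.ext (Sum.inr_injective (congrArg Subtype.val hpq))
  have hsurj : Function.Surjective
      (fun (p : {a // a ∈ β₂}) => (⟨Sum.inr p.1, p.2⟩ : {a // a ∈ β})) := by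
    rintro ⟨a, ha⟩
    obtain ⟨y, rfl⟩ := hright a ha
    exact ⟨⟨y, ha⟩, rfl⟩
  have hiso' : (g.restrict β₂ hβ₂).Iso ((f.prod g).restrict β hβ) := by
    refine ⟨Equiv.ofBijective _ ⟨hinj, hsurj⟩, fun p => rfl, fun a b c => ?_⟩
    change {x // x ∈ β₂} at a b c
    change (a.1, b.1, c.1) ∈ g.S ↔ ((Sum.inr a.1, Sum.inr b.1, Sum.inr c.1) :
      (f.prod g).carrier × (f.prod g).carrier × (f.prod g).carrier) ∈ (f.prod g).S
    constructor
    · intro ht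
      exact Or.inr ⟨a.1, b.1, c.1, ht, rfl⟩
    · rintro (⟨a', b', c', ht, heq⟩ | ⟨a', b', c', ht, heq⟩)
      · replace heq : (Sum.inr a.1 : (f.carrier ⊕ g.carrier)) = Sum.inl a' ∧ (Sum.inr b.1 : (f.carrier ⊕ g.carrier)) = Sum.inl b' ∧
            (Sum.inr c.1 : (f.carrier ⊕ g.carrier)) = Sum.inl c' :=
          ⟨congrArg Prod.fst heq, congrArg (fun z => z.2.1) heq, congrArg (fun z => z.2.2) heq⟩
        exact absurd heq.1 (by simp)
      · replace heq : (Sum.inr a.1 : (f.carrier ⊕ g.carrier)) = Sum.inr a' ∧ (Sum.inr b.1 : (f.carrier ⊕ g.carrier)) = Sum.inr b' ∧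
            (Sum.inr c.1 : (f.carrier ⊕ g.carrier)) = Sum.inr c' :=
          ⟨congrArg Prod.fst heq, congrArg (fun z => z.2.1) heq, congrArg (fun z => z.2.2) heq⟩
        obtain ⟨h1, h2, h3⟩ := heq
        show (a.1, b.1, c.1) ∈ g.S
        rw [Sum.inr_injective h1, Sum.inr_injective h2, Sum.inr_injective h3]
        exact ht
  exact ⟨β₂, hβ₂, hs₂, hiso.trans hiso'.symm⟩

theorem composite_of_mixed {h : HDT} (f g : HDT) (β : Set (f.prod g).carrier)
    (hβ : ∀ a ∈ β, (f.prod g).tau a ∈ β)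
    (hiso : h.Iso ((f.prod g).restrict β hβ))
    {a : f.carrier} {b : g.carrier} (ha : Sum.inl a ∈ β) (hb : Sum.inr b ∈ β) :
    h.IsComposite := by
  apply IsComposite.of_iso hiso
  refine ⟨{p : {x // x ∈ β} | p.1.isLeft}, ?_, ?_, ?_, ?_⟩
  · rintro ⟨(u | u), hu⟩ hp
    · exact rfl
    · exact Bool.noConfusion hp
  · rintro ⟨p, q, r⟩ ht
    rcases ht with ⟨a', b', c', -, heq⟩ | ⟨a', b', c', -, heq⟩
    · left
      have h1 : p.1 = Sum.inl a' := congrArg Prod.fst heq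
      have h2 : q.1 = Sum.inl b' := congrArg (fun z => z.2.1) heq
      have h3 : r.1 = Sum.inl c' := congrArg (fun z => z.2.2) heq
      refine ⟨?_, ?_, ?_⟩
      · show Sum.isLeft p.1 = true; rw [h1]; rfl
      · show Sum.isLeft q.1 = true; rw [h2]; rfl
      · show Sum.isLeft r.1 = true; rw [h3]; rfl
    · right
      have h1 : p.1 = Sum.inr a' := congrArg Prod.fst heq
      have h2 : q.1 = Sum.inr b' := congrArg (fun z => z.2.1) heq
      have h3 : r.1 = Sum.inr c' := congrArg (fun z => z.2.2) heq
      refine ⟨?_, ?_, ?_⟩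
      · intro hp
        have hp' : Sum.isLeft p.1 = true := hp
        rw [h1] at hp'
        exact Bool.noConfusion hp'
      · intro hp
        have hp' : Sum.isLeft q.1 = true := hp
        rw [h2] at hp'
        exact Bool.noConfusion hp'
      · intro hp
        have hp' : Sum.isLeft r.1 = true := hp
        rw [h3] at hp'
        exact Bool.noConfusion hp'
  · exact ⟨⟨Sum.inl a, ha⟩, rfl⟩
  · intro hu
    have : (⟨Sum.inr b, hb⟩ : {x // x ∈ β}) ∈ {p : {x // x ∈ β} | p.1.isLeft} :=
      hu ▸ Set.mem_univ _
    exact Bool.noConfusion this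

end HDT

/-- if a prime `h` is a factor of a product of primes `h₁, …, hₙ`, then `h`
is isomorphic to one of the `hᵢ`. -/
theorem stmt8 (h : HDT) (l : List HDT) (hh : h.IsPrime) (hl : ∀ x ∈ l, x.IsPrime)
    (hfac : h.IsFactorOf (HDT.listProd l)) :
    ∃ x ∈ l, h.Iso x := by
  induction l with
  | nil =>
    obtain ⟨β, hβ, hs, e, -, -⟩ := hfac
    obtain ⟨a⟩ := hh.1
    exact ((e a).1 : Empty).elim
  | cons x t ih =>
    have hfac' : h.IsFactorOf (x.prod (HDT.listProd t)) := hfac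
    obtain ⟨β, hβ, hs, hiso⟩ := hfac'
    by_cases hL : ∀ a ∈ β, ∃ y, a = Sum.inl y
    · have hfx : h.IsFactorOf x := HDT.factor_left x (HDT.listProd t) β hβ hs hiso hL
      exact ⟨x, List.mem_cons_self,
        HDT.iso_of_prime_factor hh (hl x List.mem_cons_self) hfx⟩
    · by_cases hR : ∀ a ∈ β, ∃ y, a = Sum.inr y
      · have hft : h.IsFactorOf (HDT.listProd t) :=
          HDT.factor_right x (HDT.listProd t) β hβ hs hiso hR
        obtain ⟨y, hy, hiy⟩ := ih (fun z hz => hl z (List.mem_cons_of_mem x hz)) hft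
        exact ⟨y, List.mem_cons_of_mem x hy, hiy⟩
      · have hA : ∃ u : (HDT.listProd t).carrier, Sum.inr u ∈ β := by
          by_contra hA'
          apply hL
          intro a ha
          cases a with
          | inl u => exact ⟨u, rfl⟩
          | inr u => exact absurd ⟨u, ha⟩ hA'
        have hB : ∃ u : x.carrier, Sum.inl u ∈ β := by
          by_contra hB'
          apply hR
          intro a ha
          cases a with
          | inl u => exact absurd ⟨u, ha⟩ hB'
          | inr u => exact ⟨u, rfl⟩
        obtain ⟨u, hu⟩ := hA
        obtain ⟨v, hv⟩ := hB
        exact absurd (HDT.composite_of_mixed x (HDT.listProd t) β hβ hiso hv hu) hh.2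
end

section
/- Let (α,τ_α,S_α) be a homotopy data triple and let (β,τ_β,S_β) be a factor of (α,τ_α,S_α). Write ∼_α for the homotopy of nanophrases given by (α,τ_α,S_α) and ∼_β for the homotopy given by (β,τ_β,S_β). If p and p′ are nanophrases over β and p ∼_α p′ (regarding them as nanophrases over α), then p ∼_β p′. -/
namespace Phrase

variable {α : Type}

/-- `p` is a phrase over the subset `β ⊆ α`: every occurring letter projects into `β`. -/
def PhraseOver (β : Set α) (p : Phrase α) : Prop :=
  ∀ A : ℕ, some A ∈ p.word → p.proj A ∈ β

/-- The homotopy of nanophrases over the subset `β ⊆ α` (for a factor `(β, τ|β, S∩β³)`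
this is the homotopy given by that factor): generated by isomorphisms and moves relating
phrases over `β`. -/
def HomotopyOn (τ : α → α) (S : Set (α × α × α)) (β : Set α) :
    Phrase α → Phrase α → Prop :=
  Relation.EqvGen (fun p q => (Isom p q ∨ Move τ S p q) ∧ PhraseOver β p ∧ PhraseOver β q)

end Phrase

namespace Phrase

variable {α : Type}

open Classical in
/-- keep separators and letters projecting into `β` -/
noncomputable def keep (β : Set α) (proj : ℕ → α) : Option ℕ → Bool
  | none => true
  | some A => if proj A ∈ β then true else false

lemma keep_none (β : Set α) (proj : ℕ → α) : keep β proj none = true := rfl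

lemma keep_some_iff (β : Set α) (proj : ℕ → α) (A : ℕ) :
    keep β proj (some A) = true ↔ proj A ∈ β := by
  unfold keep; split <;> simp_all

lemma keep_some_pos (β : Set α) (proj : ℕ → α) {A : ℕ} (h : proj A ∈ β) :
    keep β proj (some A) = true := (keep_some_iff β proj A).2 h

lemma keep_some_neg (β : Set α) (proj : ℕ → α) {A : ℕ} (h : proj A ∉ β) :
    keep β proj (some A) = false := by
  cases hk : keep β proj (some A)
  · rfl
  · exact absurd ((keep_some_iff β proj A).1 hk) h

/-- the restriction of a phrase to the letters projecting into `β` -/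
noncomputable def restr (β : Set α) (p : Phrase α) : Phrase α :=
  ⟨p.word.filter (keep β p.proj), p.proj⟩

lemma restr_over (β : Set α) (p : Phrase α) : PhraseOver β (restr β p) := by
  intro A hA
  have := List.of_mem_filter hA
  exact (keep_some_iff β p.proj A).1 this

lemma restr_eq_self {β : Set α} {p : Phrase α} (h : PhraseOver β p) : restr β p = p := by
  unfold restr
  have : p.word.filter (keep β p.proj) = p.word := by
    apply List.filter_eq_self.2
    intro a ha
    match a with
    | none => rfl
    | some A => exact keep_some_pos β p.proj (h A ha)
  rw [this]

lemma restr_step {τ : α → α} {S : Set (α × α × α)} {β : Set α}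
    (hτ : ∀ a : α, τ (τ a) = a) (hβτ : ∀ a ∈ β, τ a ∈ β)
    (hβS : ∀ t ∈ S,
      (t.1 ∈ β ∧ t.2.1 ∈ β ∧ t.2.2 ∈ β) ∨ (t.1 ∉ β ∧ t.2.1 ∉ β ∧ t.2.2 ∉ β))
    {p q : Phrase α} (h : Isom p q ∨ Move τ S p q) :
    (Isom (restr β p) (restr β q) ∨ Move τ S (restr β p) (restr β q)) ∨
      restr β p = restr β q := by
  rcases h with ⟨f, hword, hproj⟩ | ⟨hpr, hmv⟩
  · left; left
    refine ⟨f, ?_, ?_⟩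
    · show q.word.filter (keep β q.proj) = (p.word.filter (keep β p.proj)).map (Option.map f)
      rw [hword, List.filter_map]
      congr 1
      apply List.filter_congr
      intro o ho
      match o with
      | none => rfl
      | some A =>
        show keep β q.proj (some (f A)) = keep β p.proj (some A)
        by_cases hb : p.proj A ∈ β
        · rw [keep_some_pos β p.proj hb, keep_some_pos β q.proj (by rw [hproj A ho]; exact hb)]
        · rw [keep_some_neg β p.proj hb, keep_some_neg β q.proj (by rw [hproj A ho]; exact hb)]
    · intro A hA
      exact hproj A (List.mem_of_mem_filter hA)
  · -- a move
    have hk : keep β q.proj = keep β p.proj := by rw [hpr]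
    have hwq : (restr β q).word = q.word.filter (keep β p.proj) := by
      show q.word.filter (keep β q.proj) = _; rw [hk]
    have hprr : (restr β q).proj = (restr β p).proj := hpr
    set k := keep β p.proj with hkdef
    rcases hmv with ⟨x, y, A, hp, hq⟩ | ⟨x, y, z, A, B, hAB, hp, hq⟩ |
        ⟨x, y, z, t, A, B, C, hS, hp, hq⟩
    · by_cases hA : p.proj A ∈ β
      · left; right
        refine ⟨hprr, Or.inl ⟨x.filter k, y.filter k, A, ?_, ?_⟩⟩
        · show p.word.filter k = _
          rw [hp]
          simp [List.filter_append, List.filter_cons, keep_some_pos β p.proj hA, hkdef]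
        · rw [hwq, hq, List.filter_append]
      · right
        have hw : (restr β p).word = (restr β q).word := by
          show p.word.filter k = _
          rw [hwq, hp, hq]
          simp [List.filter_append, List.filter_cons, keep_some_neg β p.proj hA, hkdef]
        cases hrp : restr β p; cases hrq : restr β q
        simp only [Phrase.mk.injEq]
        constructor
        · have := hw; rw [hrp, hrq] at this; exact this
        · have := hprr; rw [hrp, hrq] at this; exact this.symm
    · have hiff : (p.proj A ∈ β ∧ p.proj B ∈ β) ∨ (p.proj A ∉ β ∧ p.proj B ∉ β) := by
        by_cases hA : p.proj A ∈ β
        · exact Or.inl ⟨hA, by rw [← hAB]; exact hβτ _ hA⟩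
        · refine Or.inr ⟨hA, fun hB => hA ?_⟩
          have := hβτ _ hB
          rw [← hAB, hτ] at this
          exact this
      rcases hiff with ⟨hA, hB⟩ | ⟨hA, hB⟩
      · left; right
        refine ⟨hprr, Or.inr (Or.inl ⟨x.filter k, y.filter k, z.filter k, A, B, ?_, ?_, ?_⟩)⟩
        · show τ ((restr β p).proj A) = (restr β p).proj B; exact hAB
        · show p.word.filter k = _
          rw [hp]
          simp [List.filter_append, List.filter_cons, keep_some_pos β p.proj hA,
            keep_some_pos β p.proj hB, hkdef]
        · rw [hwq, hq]; simp [List.filter_append]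
      · right
        have hw : (restr β p).word = (restr β q).word := by
          show p.word.filter k = _
          rw [hwq, hp, hq]
          simp [List.filter_append, List.filter_cons, keep_some_neg β p.proj hA,
            keep_some_neg β p.proj hB, hkdef]
        cases hrp : restr β p; cases hrq : restr β q
        simp only [Phrase.mk.injEq]
        constructor
        · have := hw; rw [hrp, hrq] at this; exact this
        · have := hprr; rw [hrp, hrq] at this; exact this.symm
    · rcases hβS _ hS with ⟨hA, hB, hC⟩ | ⟨hA, hB, hC⟩
      · left; right
        refine ⟨hprr, Or.inr (Or.inr
          ⟨x.filter k, y.filter k, z.filter k, t.filter k, A, B, C, hS, ?_, ?_⟩)⟩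
        · show p.word.filter k = _
          rw [hp]
          simp [List.filter_append, List.filter_cons, keep_some_pos β p.proj hA,
            keep_some_pos β p.proj hB, keep_some_pos β p.proj hC, hkdef]
        · rw [hwq, hq]
          simp [List.filter_append, List.filter_cons, keep_some_pos β p.proj hA,
            keep_some_pos β p.proj hB, keep_some_pos β p.proj hC, hkdef]
      · right
        have hw : (restr β p).word = (restr β q).word := by
          show p.word.filter k = _
          rw [hwq, hp, hq]
          simp [List.filter_append, List.filter_cons, keep_some_neg β p.proj hA,
            keep_some_neg β p.proj hB, keep_some_neg β p.proj hC, hkdef]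
        cases hrp : restr β p; cases hrq : restr β q
        simp only [Phrase.mk.injEq]
        constructor
        · have := hw; rw [hrp, hrq] at this; exact this
        · have := hprr; rw [hrp, hrq] at this; exact this.symm

lemma restr_homotopy {τ : α → α} {S : Set (α × α × α)} {β : Set α}
    (hτ : ∀ a : α, τ (τ a) = a) (hβτ : ∀ a ∈ β, τ a ∈ β)
    (hβS : ∀ t ∈ S,
      (t.1 ∈ β ∧ t.2.1 ∈ β ∧ t.2.2 ∈ β) ∨ (t.1 ∉ β ∧ t.2.1 ∉ β ∧ t.2.2 ∉ β))
    {p q : Phrase α} (h : Homotopy τ S p q) :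
    HomotopyOn τ S β (restr β p) (restr β q) := by
  induction h with
  | rel a b hab =>
    rcases restr_step hτ hβτ hβS (β := β) hab with hstep | heq
    · exact Relation.EqvGen.rel _ _ ⟨hstep, restr_over β a, restr_over β b⟩
    · rw [heq]; exact Relation.EqvGen.refl _
  | refl a => exact Relation.EqvGen.refl _
  | symm a b _ ih => exact Relation.EqvGen.symm _ _ ih
  | trans a b c _ _ ih1 ih2 => exact Relation.EqvGen.trans _ _ _ ih1 ih2

end Phrase

open Phrase in
/-- for a factor `(β, τ|β, S∩β³)` of `(α, τ, S)`, nanophrases over `β`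
that are homotopic over `α` are already homotopic over `β`. -/
theorem stmt10 {α : Type} [Finite α] [Nonempty α]
    (τ : α → α) (hτ : ∀ a : α, τ (τ a) = a) (S : Set (α × α × α))
    (β : Set α) (hβτ : ∀ a ∈ β, τ a ∈ β)
    (hβS : ∀ t ∈ S,
      (t.1 ∈ β ∧ t.2.1 ∈ β ∧ t.2.2 ∈ β) ∨ (t.1 ∉ β ∧ t.2.1 ∉ β ∧ t.2.2 ∉ β))
    (p p' : Phrase α) (hg : p.IsGauss) (hg' : p'.IsGauss)
    (hpβ : PhraseOver β p) (hp'β : PhraseOver β p')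
    (h : Homotopy τ S p p') :
    HomotopyOn τ S β p p' := by
  have := restr_homotopy (β := β) hτ hβτ hβS h
  rwa [restr_eq_self hpβ, restr_eq_self hp'β] at this
end

section
/- Let (α,τ,S_∅) be a homotopy data triple in which S_∅ is the empty set, and consider the homotopy it gives (so only moves H1 and H2 occur). Let p be a nanophrase over α and suppose p₁ and p₂ are the results of applying two different reducing moves to p. Then there exists a nanophrase p′ such that p₁ ≥ p′ and p₂ ≥ p′, where q ≥ r means that r is equal (up to isomorphism) to q or is derivable from q by a sequence of reducing moves. -/
namespace Phrase

variable {α : Type}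

/-- A reducing move for the homotopy with `S = ∅`: an application of H1 or H2 in the
direction that removes letters. -/
def RMove (τ : α → α) (p q : Phrase α) : Prop :=
  q.proj = p.proj ∧
  ((∃ (x y : List (Option ℕ)) (A : ℕ),
      p.word = x ++ some A :: some A :: y ∧ q.word = x ++ y) ∨
   (∃ (x y z : List (Option ℕ)) (A B : ℕ),
      τ (p.proj A) = p.proj B ∧
      p.word = x ++ some A :: some B :: (y ++ some B :: some A :: z) ∧
      q.word = x ++ (y ++ z)))

/-- `q ≥ r`: `r` is equal to `q` up to isomorphism, or derivable from `q` by a sequence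
of reducing moves (and isomorphisms). -/
def Ge (τ : α → α) : Phrase α → Phrase α → Prop :=
  Relation.ReflTransGen (fun a b => RMove τ a b ∨ Isom a b)


variable {α : Type}

private lemma pair_overlap {γ : Type*} {x y x' y' : List γ} {a b c d : γ}
    (h : x ++ a :: b :: y = x' ++ c :: d :: y') :
    (x = x' ∧ a = c ∧ b = d ∧ y = y') ∨
    (x' = x ++ [a] ∧ c = b ∧ y = d :: y') ∨
    (x = x' ++ [c] ∧ a = d ∧ y' = b :: y) ∨
    (∃ m, x' = x ++ a :: b :: m ∧ y = m ++ c :: d :: y') ∨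
    (∃ m, x = x' ++ c :: d :: m ∧ y' = m ++ a :: b :: y) := by
  rcases List.append_eq_append_iff.mp h with ⟨m, hm1, hm2⟩ | ⟨m, hm1, hm2⟩
  · rcases m with _ | ⟨e, _ | ⟨f, m⟩⟩
    · simp only [List.append_nil] at hm1
      simp only [List.nil_append, List.cons.injEq] at hm2
      exact Or.inl ⟨hm1.symm, hm2.1, hm2.2.1, hm2.2.2⟩
    · simp only [List.singleton_append, List.cons.injEq] at hm2
      obtain ⟨rfl, rfl, rfl⟩ := hm2
      exact Or.inr (Or.inl ⟨hm1, rfl, rfl⟩)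
    · simp only [List.cons_append, List.cons.injEq] at hm2
      obtain ⟨rfl, rfl, rfl⟩ := hm2
      exact Or.inr (Or.inr (Or.inr (Or.inl ⟨m, hm1, rfl⟩)))
  · rcases m with _ | ⟨e, _ | ⟨f, m⟩⟩
    · simp only [List.append_nil] at hm1
      simp only [List.nil_append, List.cons.injEq] at hm2
      exact Or.inl ⟨hm1, hm2.1.symm, hm2.2.1.symm, hm2.2.2.symm⟩
    · simp only [List.singleton_append, List.cons.injEq] at hm2
      obtain ⟨rfl, rfl, rfl⟩ := hm2
      exact Or.inr (Or.inr (Or.inl ⟨hm1, rfl, rfl⟩))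
    · simp only [List.cons_append, List.cons.injEq] at hm2
      obtain ⟨rfl, rfl, rfl⟩ := hm2
      exact Or.inr (Or.inr (Or.inr (Or.inr ⟨m, hm1, rfl⟩)))

private lemma no_three {p : Phrase α} (hg : p.IsGauss) {A : ℕ} {u v s t : List (Option ℕ)}
    (h : p.word = u ++ some A :: (v ++ some A :: (s ++ some A :: t))) : False := by
  have hh := hg A
  rw [h] at hh
  simp [List.count_append, List.count_cons] at hh
  omega

private lemma two_occ {p : Phrase α} (hg : p.IsGauss) {A : ℕ} {u v t : List (Option ℕ)}
    (h : p.word = u ++ some A :: (v ++ some A :: t)) :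
    some A ∉ u ∧ some A ∉ v ∧ some A ∉ t := by
  have hh := hg A
  rw [h] at hh
  simp [List.count_append, List.count_cons] at hh
  refine ⟨List.count_eq_zero.mp (by omega), List.count_eq_zero.mp (by omega),
    List.count_eq_zero.mp (by omega)⟩

private lemma map_swap_fix {A B : ℕ} {l : List (Option ℕ)} (hA : some A ∉ l) (hB : some B ∉ l) :
    l.map (Option.map (Equiv.swap A B)) = l := by
  induction l with
  | nil => rfl
  | cons o l ih =>
    simp only [List.mem_cons, not_or] at hA hB
    simp only [List.map_cons, ih hA.2 hB.2]
    congr 1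
    cases o with
    | none => rfl
    | some C =>
      have h1 : C ≠ A := fun h => hA.1 (by rw [h])
      have h2 : C ≠ B := fun h => hB.1 (by rw [h])
      simp [Equiv.swap_apply_of_ne_of_ne h1 h2]

private lemma phrase_eq {p q : Phrase α} (hw : p.word = q.word) (hp : p.proj = q.proj) :
    p = q := by
  cases p; cases q; cases hw; cases hp; rfl

private lemma ge_of_eq {τ : α → α} {p q : Phrase α} (h : p = q) : Ge τ p q :=
  h ▸ Relation.ReflTransGen.refl

private lemma ge_single {τ : α → α} {p q : Phrase α} (h : RMove τ p q) : Ge τ p q :=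
  Relation.ReflTransGen.single (Or.inl h)

private lemma conf11 (τ : α → α) {p p₁ p₂ : Phrase α} (hg : p.IsGauss)
    (e1 : p₁.proj = p.proj) (e2 : p₂.proj = p.proj)
    {x y x' y' : List (Option ℕ)} {A C : ℕ}
    (hw : p.word = x ++ some A :: some A :: y) (h1 : p₁.word = x ++ y)
    (hw' : p.word = x' ++ some C :: some C :: y') (h2 : p₂.word = x' ++ y')
    (hlen : x.length ≤ x'.length) :
    ∃ p' : Phrase α, Ge τ p₁ p' ∧ Ge τ p₂ p' := by
  rcases pair_overlap (hw.symm.trans hw') with ⟨rfl, _, _, rfl⟩ | ⟨hx, hc, hy⟩ |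
    ⟨hx, -, -⟩ | ⟨m, hx, hy⟩ | ⟨m, hx, -⟩
  · exact ⟨p₁, Relation.ReflTransGen.refl,
      ge_of_eq (phrase_eq (h2.trans h1.symm) (e2.trans e1.symm))⟩
  · obtain rfl : C = A := by injection hc
    exact (no_three hg (A := C) (u := x) (v := []) (s := []) (t := y')
      (by rw [hw, hy]; simp)).elim
  · exfalso
    have := congrArg List.length hx
    simp at this
    omega
  · refine ⟨⟨(x ++ m) ++ y', p.proj⟩,
      ge_single ⟨by simp [e1], Or.inl ⟨x ++ m, y', C, by simp [h1, hy], by simp⟩⟩,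
      ge_single ⟨by simp [e2], Or.inl ⟨x, m ++ y', A, by simp [h2, hx], by simp⟩⟩⟩
  · exfalso
    have := congrArg List.length hx
    simp at this
    omega
private lemma conf12 (τ : α → α) {p p₁ p₂ : Phrase α} (hg : p.IsGauss)
    (e1 : p₁.proj = p.proj) (e2 : p₂.proj = p.proj)
    {k l x y z : List (Option ℕ)} {C A B : ℕ}
    (hw1 : p.word = k ++ some C :: some C :: l) (h1 : p₁.word = k ++ l)
    (ht : τ (p.proj A) = p.proj B)
    (hw2 : p.word = x ++ some A :: some B :: (y ++ some B :: some A :: z))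
    (h2 : p₂.word = x ++ (y ++ z)) :
    ∃ p' : Phrase α, Ge τ p₁ p' ∧ Ge τ p₂ p' := by
  rcases pair_overlap (hw1.symm.trans hw2) with ⟨rfl, ha, hb, hl⟩ | ⟨hx, hc, hl⟩ |
    ⟨hk, hc, hl⟩ | ⟨m, hx, hl⟩ | ⟨m, hk, hl⟩
  · -- k = x, C = A, C = B : three A's
    obtain rfl : C = A := Option.some.inj ha
    obtain rfl : C = B := Option.some.inj hb
    exact (no_three hg (A := C) (u := k) (v := []) (s := y) (t := some C :: z)
      (by rw [hw2]; simp)).elim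
  · -- x = k ++ [some C], A = C : three A's
    obtain rfl : A = C := Option.some.inj hc
    exact (no_three hg (A := A) (u := k) (v := []) (s := some B :: y ++ [some B]) (t := z)
      (by rw [hw1, hl]; simp)).elim
  · -- k = x ++ [some A], C = B, (y ++ B :: A :: z) = some C :: l
    obtain rfl : C = B := Option.some.inj hc
    cases y with
    | nil =>
      simp only [List.nil_append, List.cons.injEq] at hl
      obtain ⟨-, rfl⟩ := hl
      refine ⟨p₂, ge_single ⟨e2.trans e1.symm,
        Or.inl ⟨x, z, A, by rw [h1, hk]; simp, by rw [h2]; simp⟩⟩,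
        Relation.ReflTransGen.refl⟩
    | cons o y₀ =>
      simp only [List.cons_append, List.cons.injEq] at hl
      obtain ⟨rfl, -⟩ := hl
      exact (no_three hg (A := C) (u := x ++ [some A]) (v := []) (s := y₀) (t := some A :: z)
        (by rw [hw2]; simp)).elim
  · -- CC entirely before the H2 pattern
    refine ⟨⟨(k ++ m) ++ (y ++ z), p.proj⟩,
      ge_single ⟨by simp [e1], Or.inr ⟨k ++ m, y, z, A, B, by rw [e1]; exact ht,
        by rw [h1, hl]; simp, by simp⟩⟩,
      ge_single ⟨by simp [e2], Or.inl ⟨k, m ++ (y ++ z), C,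
        by rw [h2, hx]; simp, by simp⟩⟩⟩
  · -- k = x ++ A :: B :: m, and (y ++ B::A::z) = m ++ C::C::l
    rcases pair_overlap hl with ⟨rfl, hb, ha, rfl⟩ | ⟨hm, hc, hz⟩ |
      ⟨hy, hc, hl2⟩ | ⟨m₂, hm, hz⟩ | ⟨m₂, hy, hl2⟩
    · -- y = m, B = C, A = C : A = B = C, three C's
      obtain rfl : B = C := Option.some.inj hb
      obtain rfl : A = B := Option.some.inj ha
      exact (no_three hg (A := A) (u := x) (v := []) (s := y) (t := some A :: z)
        (by rw [hw2]; simp)).elim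
    · -- m = y ++ [some B], C = A, z = some C :: l : three A's
      obtain rfl : C = A := Option.some.inj hc
      exact (no_three hg (A := C) (u := x) (v := some B :: y ++ [some B]) (s := [])
        (t := l) (by rw [hw2, hz]; simp)).elim
    · -- y = m ++ [some C], B = C : three B's
      obtain rfl : B = C := Option.some.inj hc
      exact (no_three hg (A := B) (u := x ++ [some A]) (v := m) (s := [])
        (t := some A :: z) (by rw [hw2, hy]; simp)).elim
    · -- CC inside z
      refine ⟨⟨x ++ (y ++ (m₂ ++ l)), p.proj⟩,
        ge_single ⟨by simp [e1], Or.inr ⟨x, y, m₂ ++ l, A, B, by rw [e1]; exact ht,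
          by rw [h1, hk, hm]; simp, by simp⟩⟩,
        ge_single ⟨by simp [e2], Or.inl ⟨x ++ (y ++ m₂), l, C,
          by rw [h2, hz]; simp, by simp⟩⟩⟩
    · -- CC inside y
      refine ⟨⟨x ++ ((m ++ m₂) ++ z), p.proj⟩,
        ge_single ⟨by simp [e1], Or.inr ⟨x, m ++ m₂, z, A, B, by rw [e1]; exact ht,
          by rw [h1, hk, hl2]; simp, by simp⟩⟩,
        ge_single ⟨by simp [e2], Or.inl ⟨x ++ m, m₂ ++ z, C,
          by rw [h2, hy]; simp, by simp⟩⟩⟩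
private lemma conf22 (τ : α → α) (hτ : ∀ a : α, τ (τ a) = a) {p p₁ p₂ : Phrase α}
    (hg : p.IsGauss) (e1 : p₁.proj = p.proj) (e2 : p₂.proj = p.proj)
    {x y z x' y' z' : List (Option ℕ)} {A B A' B' : ℕ}
    (ht1 : τ (p.proj A) = p.proj B)
    (hw1 : p.word = x ++ some A :: some B :: (y ++ some B :: some A :: z))
    (h1 : p₁.word = x ++ (y ++ z))
    (ht2 : τ (p.proj A') = p.proj B')
    (hw2 : p.word = x' ++ some A' :: some B' :: (y' ++ some B' :: some A' :: z'))
    (h2 : p₂.word = x' ++ (y' ++ z'))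
    (hlen : x.length ≤ x'.length) :
    ∃ p' : Phrase α, Ge τ p₁ p' ∧ Ge τ p₂ p' := by
  rcases pair_overlap (hw1.symm.trans hw2) with ⟨rfl, ha, hb, he⟩ | ⟨hx, hc, he⟩ |
    ⟨hx, -, -⟩ | ⟨m, hx, he⟩ | ⟨m, hx, -⟩
  · -- same first pair
    obtain rfl : A = A' := Option.some.inj ha
    obtain rfl : B = B' := Option.some.inj hb
    rcases pair_overlap he with ⟨rfl, -, -, rfl⟩ | ⟨hy, hc, hz⟩ |
      ⟨hy, hc, hz⟩ | ⟨m, hy, hz⟩ | ⟨m, hy, hz⟩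
    · -- identical moves
      exact ⟨p₁, Relation.ReflTransGen.refl,
        ge_of_eq (phrase_eq (by rw [h1, h2]) (e2.trans e1.symm))⟩
    · -- A = B
      obtain rfl : B = A := Option.some.inj hc
      exact (no_three hg (A := B) (u := x) (v := []) (s := y) (t := some B :: z)
        (by rw [hw1]; simp)).elim
    · -- A = B
      obtain rfl : B = A := Option.some.inj hc
      exact (no_three hg (A := B) (u := x) (v := []) (s := y) (t := some B :: z)
        (by rw [hw1]; simp)).elim
    · -- three B's
      exact (no_three hg (A := B) (u := x ++ [some A]) (v := y) (s := some A :: m)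
        (t := some A :: z') (by rw [hw1, hz]; simp)).elim
    · -- three B's
      exact (no_three hg (A := B) (u := x ++ [some A]) (v := y') (s := some A :: m)
        (t := some A :: z) (by rw [hw2, hz]; simp)).elim
  · -- x' = x ++ [some A], A' = B
    obtain rfl : B = A' := (Option.some.inj hc).symm
    have he' : y ++ some B :: some A :: z
        = (some B' :: y') ++ some B' :: some B :: z' := by simpa using he
    rcases pair_overlap he' with ⟨hy, hb2, ha2, hz2⟩ | ⟨hm, hc2, hz2⟩ |
      ⟨hy, -, hz2⟩ | ⟨m, hm, hz2⟩ | ⟨m, hy, hz2⟩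
    · -- A = B
      obtain rfl : B = A := (Option.some.inj ha2).symm
      exact (no_three hg (A := B) (u := x) (v := []) (s := y) (t := some B :: z)
        (by rw [hw1]; simp)).elim
    · -- B' = A, z = some B :: z' : three B's
      exact (no_three hg (A := B) (u := x ++ [some A]) (v := y) (s := [some A])
        (t := z') (by rw [hw1, hz2]; simp)).elim
    · -- ISO case : y = (some B' :: y') ++ [some B'], z' = some A :: z
      have occA := two_occ hg (A := A) (u := x) (v := some B :: y ++ [some B]) (t := z)
        (by rw [hw1]; simp)
      have occB := two_occ hg (A := B') (u := x' ++ [some B]) (v := y') (t := some B :: z')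
        (by rw [hw2]; simp)
      have hAy' : some A ∉ y' := by
        intro hmem
        exact occA.2.1 (by simp [hy, hmem])
      have hAx : some A ∉ x := occA.1
      have hAz : some A ∉ z := occA.2.2
      have hBx : some B' ∉ x := by
        intro hmem; exact occB.1 (by simp [hx, hmem])
      have hBy' : some B' ∉ y' := occB.2.1
      have hBz : some B' ∉ z := by
        intro hmem
        exact occB.2.2 (by simp [hz2, hmem])
      have hproj : p.proj B' = p.proj A := by
        rw [← ht2, ← ht1, hτ]
      refine ⟨p₂, Relation.ReflTransGen.single (Or.inr ⟨Equiv.swap A B', ?_, ?_⟩),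
        Relation.ReflTransGen.refl⟩
      · rw [h1, h2, hy, hx, hz2]
        simp [List.map_append, map_swap_fix hAx hBx, map_swap_fix hAy' hBy',
          map_swap_fix hAz hBz, Equiv.swap_apply_right]
      · intro C hC
        rw [e1, e2]
        rcases eq_or_ne C A with rfl | hCA
        · rw [Equiv.swap_apply_left]; exact hproj
        · rcases eq_or_ne C B' with rfl | hCB
          · rw [Equiv.swap_apply_right]; exact hproj.symm
          · rw [Equiv.swap_apply_of_ne_of_ne hCA hCB]
    · -- three B's
      exact (no_three hg (A := B) (u := x ++ [some A]) (v := y) (s := some A :: m ++ [some B'])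
        (t := z') (by rw [hw1, hz2]; simp)).elim
    · -- three B's
      exact (no_three hg (A := B) (u := x ++ [some A]) (v := some B' :: y' ++ [some B'])
        (s := m) (t := some A :: z) (by rw [hw1, hy]; simp)).elim
  · -- excluded by length
    exfalso
    have := congrArg List.length hx
    simp at this
    omega
  · -- x' = x ++ some A :: some B :: m
    rcases pair_overlap he with ⟨rfl, hba, hab, htl⟩ | ⟨hm, hc, hz⟩ |
      ⟨hy, hd, htl⟩ | ⟨m₂, hm, hz⟩ | ⟨m₂, hy, htl⟩
    · -- A' = B, B' = A : three A's
      obtain rfl : B = A' := Option.some.inj hba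
      obtain rfl : A = B' := Option.some.inj hab
      exact (no_three hg (A := A) (u := x) (v := some B :: y ++ [some B])
        (s := y') (t := some B :: z') (by rw [hw1, htl]; simp)).elim
    · -- A' = A : three A's
      obtain rfl : A = A' := (Option.some.inj hc).symm
      exact (no_three hg (A := A) (u := x) (v := some B :: y ++ [some B])
        (s := some B' :: y' ++ [some B']) (t := z') (by rw [hw1, hz]; simp)).elim
    · -- y = m ++ [some A'], B' = B
      obtain rfl : B = B' := Option.some.inj hd
      cases y' with
      | nil =>
        simp only [List.nil_append, List.cons.injEq] at htl
        obtain ⟨hba, -⟩ := htl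
        obtain rfl : B = A := Option.some.inj hba
        exact (no_three hg (A := B) (u := x) (v := []) (s := y) (t := some B :: z)
          (by rw [hw1]; simp)).elim
      | cons o y'' =>
        simp only [List.cons_append, List.cons.injEq] at htl
        obtain ⟨rfl, htl2⟩ := htl
        exact (no_three hg (A := B) (u := x ++ [some A]) (v := m ++ [some A'])
          (s := some A :: y'') (t := some A' :: z')
          (by rw [hw1, hy, ← htl2]; simp)).elim
    · -- move2 entirely after move1
      refine ⟨⟨x ++ (y ++ (m₂ ++ (y' ++ z'))), p.proj⟩,
        ge_single ⟨by simp [e1], Or.inr ⟨x ++ (y ++ m₂), y', z', A', B',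
          by rw [e1]; exact ht2, by rw [h1, hz]; simp, by simp⟩⟩,
        ge_single ⟨by simp [e2], Or.inr ⟨x, y, m₂ ++ (y' ++ z'), A, B,
          by rw [e2]; exact ht1, by rw [h2, hx, hm]; simp, by simp⟩⟩⟩
    · -- first pair of move2 inside y
      rcases pair_overlap htl with ⟨rfl, hbb, haa, rfl⟩ | ⟨hm2, hc2, hz2⟩ |
        ⟨hy', hc2, hz2⟩ | ⟨m₃, hm2, hz2⟩ | ⟨m₃, hy', hz2⟩
      · -- B' = B, A' = A : three B's
        obtain rfl : B = B' := (Option.some.inj hbb).symm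
        obtain rfl : A = A' := (Option.some.inj haa).symm
        exact (no_three hg (A := B) (u := x ++ [some A]) (v := m ++ [some A])
          (s := y') (t := some A :: z') (by rw [hw1, hy]; simp)).elim
      · -- A' = B : three B's
        obtain rfl : B = A' := Option.some.inj hc2
        exact (no_three hg (A := B) (u := x ++ [some A]) (v := m)
          (s := some B' :: m₂) (t := some A :: z) (by rw [hw1, hy]; simp)).elim
      · -- B' = A : three A's
        obtain rfl : A = B' := (Option.some.inj hc2).symm
        exact (no_three hg (A := A) (u := x) (v := some B :: m ++ [some A'])
          (s := m₂ ++ [some B]) (t := some A' :: z') (by rw [hw1, hy, hz2]; simp)).elim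
      · -- move2 nested inside y
        refine ⟨⟨x ++ ((m ++ (y' ++ m₃)) ++ z), p.proj⟩,
          ge_single ⟨by simp [e1], Or.inr ⟨x ++ m, y', m₃ ++ z, A', B',
            by rw [e1]; exact ht2, by rw [h1, hy, hm2]; simp, by simp⟩⟩,
          ge_single ⟨by simp [e2], Or.inr ⟨x, m ++ (y' ++ m₃), z, A, B,
            by rw [e2]; exact ht1, by rw [h2, hx, hz2]; simp, by simp⟩⟩⟩
      · -- interleaved
        refine ⟨⟨x ++ ((m ++ m₂) ++ (m₃ ++ z')), p.proj⟩,
          ge_single ⟨by simp [e1], Or.inr ⟨x ++ m, m₂ ++ m₃, z', A', B',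
            by rw [e1]; exact ht2, by rw [h1, hy, hz2]; simp, by simp⟩⟩,
          ge_single ⟨by simp [e2], Or.inr ⟨x, m ++ m₂, m₃ ++ z', A, B,
            by rw [e2]; exact ht1, by rw [h2, hx, hy']; simp, by simp⟩⟩⟩
  · -- excluded by length
    exfalso
    have := congrArg List.length hx
    simp at this
    omega

end Phrase

open Phrase in
/-- confluence for `S = ∅`: if `p₁` and `p₂` are results of reducing
moves applied to a nanophrase `p`, then there is a common `p'` with `p₁ ≥ p'` and
`p₂ ≥ p'`. -/
theorem stmt19 {α : Type} [Finite α] [Nonempty α]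
    (τ : α → α) (hτ : ∀ a : α, τ (τ a) = a)
    (p p₁ p₂ : Phrase α) (hg : p.IsGauss)
    (h1 : RMove τ p p₁) (h2 : RMove τ p p₂) :
    ∃ p' : Phrase α, Ge τ p₁ p' ∧ Ge τ p₂ p' := by
  obtain ⟨e1, m1⟩ := h1
  obtain ⟨e2, m2⟩ := h2
  rcases m1 with ⟨x, y, A, hw1, hq1⟩ | ⟨x, y, z, A, B, ht1, hw1, hq1⟩ <;>
    rcases m2 with ⟨x', y', A', hw2, hq2⟩ | ⟨x', y', z', A', B', ht2, hw2, hq2⟩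
  · rcases le_total x.length x'.length with hle | hle
    · exact conf11 τ hg e1 e2 hw1 hq1 hw2 hq2 hle
    · obtain ⟨p', hA, hB⟩ := conf11 τ hg e2 e1 hw2 hq2 hw1 hq1 hle
      exact ⟨p', hB, hA⟩
  · exact conf12 τ hg e1 e2 hw1 hq1 ht2 hw2 hq2
  · obtain ⟨p', hA, hB⟩ := conf12 τ hg e2 e1 hw2 hq2 ht1 hw1 hq1
    exact ⟨p', hB, hA⟩
  · rcases le_total x.length x'.length with hle | hle
    · exact conf22 τ hτ hg e1 e2 ht1 hw1 hq1 ht2 hw2 hq2 hle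
    · obtain ⟨p', hA, hB⟩ := conf22 τ hτ hg e2 e1 ht2 hw2 hq2 ht1 hw1 hq1 hle
      exact ⟨p', hB, hA⟩
end
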